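/- arXiv:2501.14565 — 10 statements merged into one kernel-verified Lean document; each statement's English description precedes it below -/
import Mathlib

section
/- Let (Ω, F, P) be a probability space and let X and Y be essentially bounded real-valued random variables. Then essinf X ≤ essinf Y if and only if for every t ∈ ℝ one has esssup((t − X)₊) ≥ esssup((t − Y)₊). -/
open MeasureTheory Filter

private lemma memtop_ae_abs_le {Ω : Type*} [MeasurableSpace Ω] {μ : Measure Ω}
    {Z : Ω → ℝ} (hZ : MemLp Z ⊤ μ) : ∀ᵐ ω ∂μ, |Z ω| ≤ (eLpNormEssSup Z μ).toReal := by
  have h1 : eLpNormEssSup Z μ < ⊤ := by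
    have := hZ.2
    rwa [eLpNorm_exponent_top] at this
  filter_upwards [ae_le_eLpNormEssSup (f := Z) (μ := μ)] with ω hω
  have : (‖Z ω‖₊ : ENNReal) ≤ eLpNormEssSup Z μ := hω
  have := ENNReal.toReal_mono h1.ne this
  simpa [Real.norm_eq_abs] using this

private lemma key_essSup_max {Ω : Type*} [MeasurableSpace Ω] (μ : Measure Ω)
    [IsProbabilityMeasure μ] (Z : Ω → ℝ) {C : ℝ} (hC : ∀ᵐ ω ∂μ, |Z ω| ≤ C) (t : ℝ) :
    essSup (fun ω => max (t - Z ω) 0) μ = max (t - essInf Z μ) 0 := by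
  have hub : IsBoundedUnder (· ≤ ·) (ae μ) Z :=
    ⟨C, eventually_map.2 (hC.mono fun ω h => (abs_le.1 h).2)⟩
  have hlb : IsBoundedUnder (· ≥ ·) (ae μ) Z :=
    ⟨-C, eventually_map.2 (hC.mono fun ω h => (abs_le.1 h).1)⟩
  have hmax_ub : IsBoundedUnder (· ≤ ·) (ae μ) (fun ω => max (t - Z ω) 0) :=
    ⟨max (t + C) 0, eventually_map.2 (hC.mono fun ω h => by
      have h1 : -C ≤ Z ω := (abs_le.1 h).1
      exact max_le_max (by linarith) le_rfl)⟩
  have hmax_lb : IsBoundedUnder (· ≥ ·) (ae μ) (fun ω => max (t - Z ω) 0) :=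
    ⟨0, eventually_map.2 (Eventually.of_forall fun ω => le_max_right _ _)⟩
  have hsub_lb : IsBoundedUnder (· ≥ ·) (ae μ) (fun ω => t - Z ω) :=
    ⟨t - C, eventually_map.2 (hC.mono fun ω h => by
      have h2 : Z ω ≤ C := (abs_le.1 h).2
      linarith)⟩
  have hsub_ub : IsBoundedUnder (· ≤ ·) (ae μ) (fun ω => t - Z ω) :=
    ⟨t + C, eventually_map.2 (hC.mono fun ω h => by
      have h1 : -C ≤ Z ω := (abs_le.1 h).1
      linarith)⟩
  refine le_antisymm ?_ ?_
  · -- a.e. max (t - Z ω) 0 ≤ max (t - essInf Z) 0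
    refine limsup_le_of_le hmax_lb.isCoboundedUnder_le ?_
    filter_upwards [ae_essInf_le hlb] with ω hω
    exact max_le_max (by linarith) le_rfl
  · refine max_le ?_ ?_
    · -- t - essInf Z ≤ essSup (max ..)
      have h1 : Filter.limsup (fun ω => t - Z ω) (ae μ) = t - Filter.liminf Z (ae μ) :=
        limsup_const_sub (ae μ) Z t hub.isCoboundedUnder_ge hlb
      have h2 : Filter.limsup (fun ω => t - Z ω) (ae μ) ≤
          Filter.limsup (fun ω => max (t - Z ω) 0) (ae μ) := by
        exact limsup_le_limsup (Eventually.of_forall fun ω => le_max_left _ _)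
          hsub_lb.isCoboundedUnder_le hmax_ub
      calc t - essInf Z μ = Filter.limsup (fun ω => t - Z ω) (ae μ) := h1.symm
        _ ≤ _ := h2
    · -- 0 ≤ essSup (max ..)
      exact le_limsup_of_frequently_le
        ((Eventually.of_forall fun ω => le_max_right (t - Z ω) 0).frequently) hmax_ub

/-- For essentially bounded random variables `X, Y`,
`essinf X ≤ essinf Y` iff `esssup (t − X)₊ ≥ esssup (t − Y)₊` for every `t ∈ ℝ`. -/
theorem stmt2 {Ω : Type*} [MeasurableSpace Ω] (μ : Measure Ω) [IsProbabilityMeasure μ]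
    (X Y : Ω → ℝ) (hX : MemLp X ⊤ μ) (hY : MemLp Y ⊤ μ) :
    essInf X μ ≤ essInf Y μ ↔
      ∀ t : ℝ, essSup (fun ω => max (t - Y ω) 0) μ ≤ essSup (fun ω => max (t - X ω) 0) μ := by
  have hXb := memtop_ae_abs_le hX
  have hYb := memtop_ae_abs_le hY
  constructor
  · intro h t
    rw [key_essSup_max μ X hXb t, key_essSup_max μ Y hYb t]
    exact max_le_max (by linarith) le_rfl
  · intro h
    by_contra hc
    push_neg at hc
    set t := (essInf X μ + essInf Y μ) / 2 with ht
    have := h t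
    rw [key_essSup_max μ X hXb t, key_essSup_max μ Y hYb t] at this
    have h1 : t - essInf X μ < 0 := by rw [ht]; linarith
    have h2 : 0 < t - essInf Y μ := by rw [ht]; linarith
    rw [max_eq_right h1.le] at this
    have := le_trans (le_max_left (t - essInf Y μ) 0) this
    linarith
end

section
/- Let (Ω, F, P) be a probability space, let 0 < q ≤ q′ be real numbers, and let X and Y be real-valued random variables with E[((−X)₊)^{q′}] < ∞ and E[((−Y)₊)^{q′}] < ∞. If E[((t − X)₊)^q] ≥ E[((t − Y)₊)^q] for every t ∈ ℝ, then E[((t − X)₊)^{q′}] ≥ E[((t − Y)₊)^{q′}] for every t ∈ ℝ. (Equivalently, stochastic dominance of order p implies stochastic dominance of order p′ for all real 1 < p ≤ p′, where the order-p relation is defined via the exponent q = p − 1.) -/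
open MeasureTheory Set

namespace StochDomAux

/-- The Beta-type constant. -/
noncomputable def Bconst (a q : ℝ) : ℝ := ∫ v in (0:ℝ)..1, (1 - v) ^ a * v ^ q

lemma intInt_one {a q : ℝ} (ha : -1 < a) (hq : 0 < q) :
    IntervalIntegrable (fun v : ℝ => (1 - v) ^ a * v ^ q) volume 0 1 := by
  have h1 : IntervalIntegrable (fun v : ℝ => (1 - v) ^ a) volume 0 1 := by
    have := (intervalIntegral.intervalIntegrable_rpow' (a := 0) (b := 1) ha).comp_sub_left 1
    simpa using this.symm
  exact h1.mul_continuousOn (Real.continuous_rpow_const hq.le).continuousOn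

lemma Bconst_pos {a q : ℝ} (ha : -1 < a) (hq : 0 < q) : 0 < Bconst a q := by
  refine intervalIntegral.intervalIntegral_pos_of_pos_on (intInt_one ha hq) ?_ one_pos
  intro v hv
  exact mul_pos (Real.rpow_pos_of_pos (by linarith [hv.2]) a)
    (Real.rpow_pos_of_pos hv.1 q)

lemma interval_eval {a q : ℝ} (hq : 0 < q) {x t : ℝ} (hxt : x < t) :
    (∫ s in x..t, (t - s) ^ a * (s - x) ^ q)
      = (t - x) ^ (a + q + 1) * Bconst a q := by
  have hr : 0 < t - x := sub_pos.mpr hxt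
  set r := t - x with hrdef
  have h1 : (∫ s in x..t, (t - s) ^ a * (s - x) ^ q)
      = ∫ u in (0:ℝ)..r, (r - u) ^ a * u ^ q := by
    have h := intervalIntegral.integral_comp_add_right (a := 0) (b := r)
      (fun s => (t - s) ^ a * (s - x) ^ q) x
    rw [zero_add, show r + x = t by rw [hrdef]; ring] at h
    rw [← h]
    refine intervalIntegral.integral_congr fun u _ => ?_
    rw [show t - (u + x) = r - u by rw [hrdef]; ring, add_sub_cancel_right]
  have h2 := intervalIntegral.integral_comp_mul_left (a := 0) (b := 1)
    (fun u => (r - u) ^ a * u ^ q) hr.ne'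
  rw [mul_zero, mul_one] at h2
  have h3 : (∫ v in (0:ℝ)..1, (r - r * v) ^ a * (r * v) ^ q)
      = (r ^ a * r ^ q) * Bconst a q := by
    have hcg : ∀ v ∈ uIcc (0:ℝ) 1,
        (r - r * v) ^ a * (r * v) ^ q = (r ^ a * r ^ q) * ((1 - v) ^ a * v ^ q) := by
      intro v hv
      rw [uIcc_of_le zero_le_one] at hv
      rw [show r - r * v = r * (1 - v) by ring, Real.mul_rpow hr.le (by linarith [hv.2]),
        Real.mul_rpow hr.le hv.1]
      ring
    rw [intervalIntegral.integral_congr hcg, intervalIntegral.integral_const_mul]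
    rfl
  have h2' : (∫ v in (0:ℝ)..1, (r - r * v) ^ a * (r * v) ^ q)
      = r⁻¹ * ∫ u in (0:ℝ)..r, (r - u) ^ a * u ^ q := by
    simpa [smul_eq_mul] using h2
  have h4 : (∫ u in (0:ℝ)..r, (r - u) ^ a * u ^ q)
      = r * ∫ v in (0:ℝ)..1, (r - r * v) ^ a * (r * v) ^ q := by
    rw [h2', ← mul_assoc, mul_inv_cancel₀ hr.ne', one_mul]
  rw [h1, h4, h3, show a + q + 1 = (a + q) + 1 by ring, Real.rpow_add hr, Real.rpow_add hr,
    Real.rpow_one]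
  ring

lemma key {a q : ℝ} (ha : -1 < a) (hq : 0 < q) (t x : ℝ) :
    (∫⁻ s in Iio t, ENNReal.ofReal ((t - s) ^ a * max (s - x) 0 ^ q))
      = ENNReal.ofReal (Bconst a q) * ENNReal.ofReal (max (t - x) 0 ^ (a + q + 1)) := by
  have haq1 : 0 < a + q + 1 := by linarith
  rcases le_or_gt t x with hxt | hxt
  · have hz : ∀ s ∈ Iio t, ENNReal.ofReal ((t - s) ^ a * max (s - x) 0 ^ q) = 0 := by
      intro s hs
      rw [max_eq_right (by simp only [mem_Iio] at hs; linarith), Real.zero_rpow hq.ne',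
        mul_zero, ENNReal.ofReal_zero]
    rw [setLIntegral_congr_fun measurableSet_Iio hz, lintegral_zero,
      max_eq_right (by linarith), Real.zero_rpow haq1.ne', ENNReal.ofReal_zero, mul_zero]
  · -- x < t
    have hsplit : Iio x ∪ Ico x t = Iio t := Iio_union_Ico_eq_Iio hxt.le
    have hdis : Disjoint (Iio x) (Ico x t) := by
      refine Set.disjoint_left.2 fun s hs hs' => ?_
      exact absurd hs'.1 (not_le.2 hs)
    have hzero : (∫⁻ s in Iio x, ENNReal.ofReal ((t - s) ^ a * max (s - x) 0 ^ q)) = 0 := by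
      have hz : ∀ s ∈ Iio x, ENNReal.ofReal ((t - s) ^ a * max (s - x) 0 ^ q) = 0 := by
        intro s hs
        rw [max_eq_right (by simp only [mem_Iio] at hs; linarith), Real.zero_rpow hq.ne',
          mul_zero, ENNReal.ofReal_zero]
      rw [setLIntegral_congr_fun measurableSet_Iio hz, lintegral_zero]
    have hIco : (∫⁻ s in Ico x t, ENNReal.ofReal ((t - s) ^ a * max (s - x) 0 ^ q))
        = ∫⁻ s in Ioo x t, ENNReal.ofReal ((t - s) ^ a * max (s - x) 0 ^ q) :=
      setLIntegral_congr Ioo_ae_eq_Ico.symm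
    have hIoo : (∫⁻ s in Ioo x t, ENNReal.ofReal ((t - s) ^ a * max (s - x) 0 ^ q))
        = ∫⁻ s in Ioo x t, ENNReal.ofReal ((t - s) ^ a * (s - x) ^ q) := by
      refine setLIntegral_congr_fun measurableSet_Ioo (fun s hs => ?_)
      rw [max_eq_left (by linarith [hs.1])]
    -- integrability on (x, t)
    have hInt : IntervalIntegrable (fun s => (t - s) ^ a * (s - x) ^ q) volume x t := by
      have h1 : IntervalIntegrable (fun s : ℝ => (t - s) ^ a) volume x t := by
        have := ((intervalIntegral.intervalIntegrable_rpow' (a := 0) (b := t - x) ha).comp_sub_left t).symm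
        simpa using this
      exact h1.mul_continuousOn
        (((Real.continuous_rpow_const hq.le).comp
          (continuous_id.sub continuous_const)).continuousOn)
    have hIntOn : IntegrableOn (fun s => (t - s) ^ a * (s - x) ^ q) (Ioo x t) volume :=
      ((intervalIntegrable_iff_integrableOn_Ioo_of_le hxt.le).1 hInt)
    have hnn : 0 ≤ᵐ[volume.restrict (Ioo x t)] fun s => (t - s) ^ a * (s - x) ^ q := by
      filter_upwards [self_mem_ae_restrict measurableSet_Ioo] with s hs
      exact mul_nonneg (Real.rpow_nonneg (by linarith [hs.2]) _)
        (Real.rpow_nonneg (by linarith [hs.1]) _)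
    have hofr := ofReal_integral_eq_lintegral_ofReal hIntOn hnn
    have hval : (∫ s in Ioo x t, (t - s) ^ a * (s - x) ^ q)
        = (t - x) ^ (a + q + 1) * Bconst a q := by
      rw [← integral_Ioc_eq_integral_Ioo, ← intervalIntegral.integral_of_le hxt.le]
      exact interval_eval hq hxt
    calc (∫⁻ s in Iio t, ENNReal.ofReal ((t - s) ^ a * max (s - x) 0 ^ q))
        = ∫⁻ s in Iio x ∪ Ico x t, ENNReal.ofReal ((t - s) ^ a * max (s - x) 0 ^ q) := by
          rw [hsplit]
      _ = (∫⁻ s in Iio x, ENNReal.ofReal ((t - s) ^ a * max (s - x) 0 ^ q))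
            + ∫⁻ s in Ico x t, ENNReal.ofReal ((t - s) ^ a * max (s - x) 0 ^ q) :=
          lintegral_union measurableSet_Ico hdis
      _ = ∫⁻ s in Ioo x t, ENNReal.ofReal ((t - s) ^ a * (s - x) ^ q) := by
          rw [hzero, zero_add, hIco, hIoo]
      _ = ENNReal.ofReal (∫ s in Ioo x t, (t - s) ^ a * (s - x) ^ q) := hofr.symm
      _ = ENNReal.ofReal (Bconst a q) * ENNReal.ofReal (max (t - x) 0 ^ (a + q + 1)) := by
          rw [hval, max_eq_left (by linarith), mul_comm,
            ENNReal.ofReal_mul (Bconst_pos ha hq).le]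

lemma rpow_max_le {p q' s z : ℝ} (hp : 0 < p) (hpq : p ≤ q') :
    max (s - z) 0 ^ p ≤ 1 + 2 ^ q' * (|s| ^ q' + max (-z) 0 ^ q') := by
  have hq' : 0 < q' := lt_of_lt_of_le hp hpq
  set w := max (s - z) 0 with hw
  have hw0 : 0 ≤ w := le_max_right _ _
  have h1 : w ^ p ≤ 1 + w ^ q' := by
    rcases le_total w 1 with hw1 | hw1
    · have := Real.rpow_le_one hw0 hw1 hp.le
      nlinarith [Real.rpow_nonneg hw0 q']
    · have := Real.rpow_le_rpow_of_exponent_le hw1 hpq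
      nlinarith
  have h2 : w ≤ |s| + max (-z) 0 := by
    apply max_le
    · have h3 : -z ≤ max (-z) 0 := le_max_left _ _
      have hs : s ≤ |s| := le_abs_self s
      linarith
    · positivity
  have h3 : w ^ q' ≤ (|s| + max (-z) 0) ^ q' := Real.rpow_le_rpow hw0 h2 hq'.le
  have h4 : (|s| + max (-z) 0) ^ q' ≤ 2 ^ q' * (|s| ^ q' + max (-z) 0 ^ q') := by
    set A := |s| with hA'
    set C := max (-z) 0 with hC'
    have hA : 0 ≤ A := abs_nonneg _
    have hC : (0:ℝ) ≤ C := le_max_right _ _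
    have h5 : A + C ≤ 2 * max A C := by
      rcases le_total A C with hle | hle
      · rw [max_eq_right hle]; linarith
      · rw [max_eq_left hle]; linarith
    calc (A + C) ^ q' ≤ (2 * max A C) ^ q' :=
          Real.rpow_le_rpow (by positivity) h5 hq'.le
      _ = 2 ^ q' * max A C ^ q' := Real.mul_rpow (by norm_num) (le_trans hA (le_max_left _ _))
      _ ≤ 2 ^ q' * (A ^ q' + C ^ q') := by
          refine mul_le_mul_of_nonneg_left ?_ (Real.rpow_nonneg (by norm_num) _)
          rcases le_total A C with hle | hle
          · rw [max_eq_right hle]; nlinarith [Real.rpow_nonneg hA q']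
          · rw [max_eq_left hle]; nlinarith [Real.rpow_nonneg hC q']
  linarith

lemma integrable_max_rpow {Ω : Type*} [MeasurableSpace Ω] {μ : Measure Ω}
    [IsProbabilityMeasure μ] {q' : ℝ} {Z : Ω → ℝ} (hZm : Measurable Z)
    (hZ : Integrable (fun ω => max (-Z ω) 0 ^ q') μ)
    {p : ℝ} (hp : 0 < p) (hpq : p ≤ q') (s : ℝ) :
    Integrable (fun ω => max (s - Z ω) 0 ^ p) μ := by
  have hmeas : Measurable fun ω => max (s - Z ω) 0 ^ p :=
    ((measurable_const.sub hZm).max measurable_const).pow measurable_const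
  have hg : Integrable (fun ω => 1 + 2 ^ q' * (|s| ^ q' + max (-Z ω) 0 ^ q')) μ :=
    (integrable_const 1).add (((integrable_const (|s| ^ q')).add hZ).const_mul _)
  refine hg.mono' hmeas.aestronglyMeasurable (ae_of_all _ fun ω => ?_)
  rw [Real.norm_eq_abs, abs_of_nonneg (Real.rpow_nonneg (le_max_right _ _) _)]
  exact rpow_max_le hp hpq

end StochDomAux

open StochDomAux

/-- Stochastic dominance of order `p` implies stochastic dominance of order `p' ≥ p`:
if `E[((t−X)₊)^q] ≥ E[((t−Y)₊)^q]` for all `t`, with `0 < q ≤ q'` and finite `q'`-th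
lower moments, then `E[((t−X)₊)^{q'}] ≥ E[((t−Y)₊)^{q'}]` for all `t`. -/
theorem stmt4 {Ω : Type*} [MeasurableSpace Ω] (μ : Measure Ω) [IsProbabilityMeasure μ]
    (q q' : ℝ) (hq : 0 < q) (hqq' : q ≤ q')
    (X Y : Ω → ℝ) (hXm : Measurable X) (hYm : Measurable Y)
    (hX : Integrable (fun ω => max (-X ω) 0 ^ q') μ)
    (hY : Integrable (fun ω => max (-Y ω) 0 ^ q') μ)
    (h : ∀ t : ℝ, ∫ ω, max (t - Y ω) 0 ^ q ∂μ ≤ ∫ ω, max (t - X ω) 0 ^ q ∂μ) :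
    ∀ t : ℝ, ∫ ω, max (t - Y ω) 0 ^ q' ∂μ ≤ ∫ ω, max (t - X ω) 0 ^ q' ∂μ := by
  intro t
  rcases eq_or_lt_of_le hqq' with rfl | hlt
  · exact h t
  have hq' : 0 < q' := lt_trans hq hlt
  set a := q' - q - 1 with ha_def
  have ha : -1 < a := by rw [ha_def]; linarith
  have haq : a + q + 1 = q' := by rw [ha_def]; ring
  have hBpos : 0 < Bconst a q := Bconst_pos ha hq
  set B := ENNReal.ofReal (Bconst a q) with hB
  have hB0 : B ≠ 0 := by
    rw [hB]; simpa using hBpos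
  have hBtop : B ≠ ⊤ := ENNReal.ofReal_ne_top
  have chain : ∀ Z : Ω → ℝ, Measurable Z →
      B * (∫⁻ ω, ENNReal.ofReal (max (t - Z ω) 0 ^ q') ∂μ)
        = ∫⁻ s in Iio t, ∫⁻ ω, ENNReal.ofReal ((t - s) ^ a * max (s - Z ω) 0 ^ q) ∂μ := by
    intro Z hZm
    have hmZ : Measurable fun p : Ω × ℝ =>
        ENNReal.ofReal ((t - p.2) ^ a * max (p.2 - Z p.1) 0 ^ q) := by
      refine Measurable.ennreal_ofReal ?_
      exact ((measurable_const.sub measurable_snd).pow measurable_const).mul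
        (((measurable_snd.sub (hZm.comp measurable_fst)).max measurable_const).pow
          measurable_const)
    have hmeas : Measurable fun ω => ENNReal.ofReal (max (t - Z ω) 0 ^ q') :=
      (((measurable_const.sub hZm).max measurable_const).pow
        measurable_const).ennreal_ofReal
    rw [← lintegral_const_mul' _ _ hBtop]
    have hpt : ∀ ω, B * ENNReal.ofReal (max (t - Z ω) 0 ^ q')
        = ∫⁻ s in Iio t, ENNReal.ofReal ((t - s) ^ a * max (s - Z ω) 0 ^ q) := by
      intro ω
      have := key ha hq t (Z ω)
      rw [haq] at this
      rw [hB, ← this]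
    rw [lintegral_congr hpt]
    exact lintegral_lintegral_swap hmZ.aemeasurable
  have hlintq : ∀ s : ℝ,
      (∫⁻ ω, ENNReal.ofReal (max (s - Y ω) 0 ^ q) ∂μ)
        ≤ ∫⁻ ω, ENNReal.ofReal (max (s - X ω) 0 ^ q) ∂μ := by
    intro s
    rw [← ofReal_integral_eq_lintegral_ofReal (integrable_max_rpow hYm hY hq hqq' s)
        (ae_of_all _ fun ω => Real.rpow_nonneg (le_max_right _ _) _),
      ← ofReal_integral_eq_lintegral_ofReal (integrable_max_rpow hXm hX hq hqq' s)
        (ae_of_all _ fun ω => Real.rpow_nonneg (le_max_right _ _) _)]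
    exact ENNReal.ofReal_le_ofReal (h s)
  have hmono :
      (∫⁻ s in Iio t, ∫⁻ ω, ENNReal.ofReal ((t - s) ^ a * max (s - Y ω) 0 ^ q) ∂μ)
        ≤ ∫⁻ s in Iio t, ∫⁻ ω, ENNReal.ofReal ((t - s) ^ a * max (s - X ω) 0 ^ q) ∂μ := by
    refine lintegral_mono_ae ?_
    filter_upwards [self_mem_ae_restrict measurableSet_Iio] with s hs
    have hts : (0:ℝ) ≤ (t - s) ^ a :=
      Real.rpow_nonneg (by simp only [mem_Iio] at hs; linarith) a
    have hfac : ∀ (W : Ω → ℝ),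
        (∫⁻ ω, ENNReal.ofReal ((t - s) ^ a * max (s - W ω) 0 ^ q) ∂μ)
          = ENNReal.ofReal ((t - s) ^ a)
            * ∫⁻ ω, ENNReal.ofReal (max (s - W ω) 0 ^ q) ∂μ := by
      intro W
      simp_rw [ENNReal.ofReal_mul hts]
      exact lintegral_const_mul' _ _ ENNReal.ofReal_ne_top
    rw [hfac X, hfac Y]
    exact mul_le_mul_right (hlintq s) _
  have hchainX := chain X hXm
  have hchainY := chain Y hYm
  have hfin : B * (∫⁻ ω, ENNReal.ofReal (max (t - Y ω) 0 ^ q') ∂μ)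
      ≤ B * ∫⁻ ω, ENNReal.ofReal (max (t - X ω) 0 ^ q') ∂μ := by
    rw [hchainX, hchainY]; exact hmono
  have hLE := (ENNReal.mul_le_mul_iff_right hB0 hBtop).1 hfin
  have hIX := integrable_max_rpow hXm hX hq' le_rfl t
  have hIY := integrable_max_rpow hYm hY hq' le_rfl t
  rw [← ENNReal.ofReal_le_ofReal_iff
    (integral_nonneg fun ω => Real.rpow_nonneg (le_max_right _ _) _),
    ofReal_integral_eq_lintegral_ofReal hIY
      (ae_of_all _ fun ω => Real.rpow_nonneg (le_max_right _ _) _),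
    ofReal_integral_eq_lintegral_ofReal hIX
      (ae_of_all _ fun ω => Real.rpow_nonneg (le_max_right _ _) _)]
  exact hLE
end

section
/- Let (Ω, F, P) be a probability space, let k ≥ 2 be an integer, and let X be a real-valued random variable with E[((−X)₊)^{k−1}] < ∞. Define F_X^{(1)}(t) := P(X ≤ t) and, recursively, F_X^{(j)}(t) := ∫_{−∞}^t F_X^{(j−1)}(y) dy for j ≥ 2. Then for every t ∈ ℝ, F_X^{(k)}(t) = E[((t − X)₊)^{k−1}] / (k−1)!. Consequently, for random variables X and Y with finite (k−1)-st lower moments, F_X^{(k)}(t) ≥ F_Y^{(k)}(t) for all t ∈ ℝ if and only if ‖(t − X)₊‖_{k−1} ≥ ‖(t − Y)₊‖_{k−1} for all t ∈ ℝ. -/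
open MeasureTheory

/-- The `p`-norm `‖Z‖_p = (E[|Z|^p])^{1/p}` of a real-valued random variable. -/
noncomputable def pnorm {Ω : Type*} [MeasurableSpace Ω] (μ : Measure Ω) (p : ℝ)
    (Z : Ω → ℝ) : ℝ :=
  (∫ ω, |Z ω| ^ p ∂μ) ^ (1 / p)

/-- The repeated integrals of the distribution function:
`F_X^{(1)}(t) = P(X ≤ t)` and `F_X^{(j)}(t) = ∫_{−∞}^t F_X^{(j−1)}(y) dy` for `j ≥ 2`. -/
noncomputable def repInt {Ω : Type*} [MeasurableSpace Ω] (μ : Measure Ω) (X : Ω → ℝ) :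
    ℕ → ℝ → ℝ
  | 0 => fun _ => 0
  | 1 => fun t => (μ {ω | X ω ≤ t}).toReal
  | (j + 2) => fun t => ∫ y in Set.Iic t, repInt μ X (j + 1) y

namespace Stmt5Aux

lemma ofReal_max (x : ℝ) : ENNReal.ofReal (max x 0) = ENNReal.ofReal x := by
  rcases le_total x 0 with h | h
  · rw [max_eq_right h, ENNReal.ofReal_zero, ENNReal.ofReal_of_nonpos h]
  · rw [max_eq_left h]

/-- Inner integral computation: `∫_{-∞}^t ((y-a)₊)^m dy = ((t-a)₊)^{m+1}/(m+1)`. -/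
lemma inner_int (m : ℕ) (hm : 1 ≤ m) (a t : ℝ) :
    ∫⁻ y in Set.Iic t, ENNReal.ofReal (max (y - a) 0 ^ m) =
      ENNReal.ofReal (max (t - a) 0 ^ (m + 1) / (m + 1)) := by
  have hzero : ∀ y ≤ a, ENNReal.ofReal (max (y - a) 0 ^ m) = 0 := by
    intro y hy
    rw [max_eq_right (by linarith), zero_pow (by omega), ENNReal.ofReal_zero]
  rcases le_or_gt t a with h | h
  · rw [setLIntegral_congr_fun measurableSet_Iic
      (fun y (hy : y ≤ t) => hzero y (le_trans hy h)), lintegral_zero,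
      max_eq_right (by linarith), zero_pow (by omega), zero_div, ENNReal.ofReal_zero]
  · rw [← Set.Iic_union_Ioc_eq_Iic h.le,
      lintegral_union measurableSet_Ioc (Set.Iic_disjoint_Ioc le_rfl),
      setLIntegral_congr_fun measurableSet_Iic
        (fun y (hy : y ≤ a) => hzero y hy), lintegral_zero, zero_add]
    have hcongr : ∫⁻ y in Set.Ioc a t, ENNReal.ofReal (max (y - a) 0 ^ m) =
        ∫⁻ y in Set.Ioc a t, ENNReal.ofReal ((y - a) ^ m) := by
      refine setLIntegral_congr_fun measurableSet_Ioc (fun y hy => ?_)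
      rw [max_eq_left (by linarith [hy.1])]
    rw [hcongr]
    have hint : IntegrableOn (fun y => (y - a) ^ m) (Set.Ioc a t) := by
      exact (Continuous.pow (continuous_id.sub continuous_const) m).integrableOn_Ioc
    have hnn : 0 ≤ᵐ[volume.restrict (Set.Ioc a t)] fun y => (y - a) ^ m := by
      refine (ae_restrict_iff' measurableSet_Ioc).2 (ae_of_all _ fun y hy => ?_)
      have : (0:ℝ) ≤ y - a := by linarith [hy.1]
      positivity
    rw [← ofReal_integral_eq_lintegral_ofReal hint hnn]
    have hval : ∫ y in Set.Ioc a t, (y - a) ^ m = max (t - a) 0 ^ (m + 1) / (m + 1) := by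
      rw [← intervalIntegral.integral_of_le h.le,
        intervalIntegral.integral_comp_sub_right (fun x => x ^ m) a]
      simp only [sub_self]
      rw [integral_pow]
      rw [max_eq_left (by linarith)]
      ring
    rw [hval]

variable {Ω : Type*} [MeasurableSpace Ω] (μ : Measure Ω) [IsProbabilityMeasure μ]
  {X : Ω → ℝ} (hXm : Measurable X)

/-- Step-down of finiteness of moments. -/
lemma fin_step (m : ℕ)
    (h : ∫⁻ ω, ENNReal.ofReal (max (-X ω) 0 ^ (m + 1)) ∂μ ≠ ⊤) :
    ∫⁻ ω, ENNReal.ofReal (max (-X ω) 0 ^ m) ∂μ ≠ ⊤ := by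
  have hb : ∀ ω, ENNReal.ofReal (max (-X ω) 0 ^ m) ≤
      1 + ENNReal.ofReal (max (-X ω) 0 ^ (m + 1)) := by
    intro ω
    set g := max (-X ω) 0 with hg
    have hg0 : 0 ≤ g := le_max_right _ _
    rcases le_total g 1 with h1 | h1
    · calc ENNReal.ofReal (g ^ m) ≤ ENNReal.ofReal 1 :=
            ENNReal.ofReal_le_ofReal (pow_le_one₀ hg0 h1)
        _ ≤ 1 + _ := by simp
    · calc ENNReal.ofReal (g ^ m) ≤ ENNReal.ofReal (g ^ (m + 1)) :=
            ENNReal.ofReal_le_ofReal (pow_le_pow_right₀ h1 (by omega))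
        _ ≤ 1 + _ := le_add_self
  refine ne_top_of_le_ne_top ?_ (lintegral_mono hb)
  rw [lintegral_add_left measurable_const]
  simp only [lintegral_const, measure_univ, mul_one, one_mul]
  exact ENNReal.add_ne_top.2 ⟨by simp, h⟩

/-- Finiteness of `∫⁻ ((t-X)₊)^m`. -/
lemma G_fin (m : ℕ) (t : ℝ)
    (h : ∫⁻ ω, ENNReal.ofReal (max (-X ω) 0 ^ m) ∂μ ≠ ⊤) :
    ∫⁻ ω, ENNReal.ofReal (max (t - X ω) 0 ^ m) ∂μ ≠ ⊤ := by
  have hb : ∀ ω, ENNReal.ofReal (max (t - X ω) 0 ^ m) ≤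
      ENNReal.ofReal (2 ^ m) *
        (ENNReal.ofReal (|t| ^ m) + ENNReal.ofReal (max (-X ω) 0 ^ m)) := by
    intro ω
    set g := max (-X ω) 0 with hg
    have hg0 : 0 ≤ g := le_max_right _ _
    have h1 : max (t - X ω) 0 ≤ |t| + g := by
      rcases le_total (t - X ω) 0 with h' | h'
      · rw [max_eq_right h']; positivity
      · rw [max_eq_left h']
        have h2 : t ≤ |t| := le_abs_self t
        have h3 : -X ω ≤ g := le_max_left _ _
        linarith
    have h2 : max (t - X ω) 0 ^ m ≤ 2 ^ m * (|t| ^ m + g ^ m) := by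
      calc max (t - X ω) 0 ^ m ≤ (|t| + g) ^ m :=
            pow_le_pow_left₀ (le_max_right _ _) h1 m
        _ ≤ 2 ^ (m - 1) * (|t| ^ m + g ^ m) := add_pow_le (abs_nonneg t) hg0 m
        _ ≤ 2 ^ m * (|t| ^ m + g ^ m) := by
            have : (2:ℝ) ^ (m - 1) ≤ 2 ^ m := pow_le_pow_right₀ one_le_two (by omega)
            have hnn : (0:ℝ) ≤ |t| ^ m + g ^ m := by positivity
            nlinarith
    calc ENNReal.ofReal (max (t - X ω) 0 ^ m)
        ≤ ENNReal.ofReal (2 ^ m * (|t| ^ m + g ^ m)) := ENNReal.ofReal_le_ofReal h2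
      _ = ENNReal.ofReal (2 ^ m) * (ENNReal.ofReal (|t| ^ m) + ENNReal.ofReal (g ^ m)) := by
          rw [ENNReal.ofReal_mul (by positivity), ENNReal.ofReal_add (by positivity) (by positivity)]
  refine ne_top_of_le_ne_top ?_ (lintegral_mono hb)
  rw [lintegral_const_mul' _ _ ENNReal.ofReal_ne_top, lintegral_add_left measurable_const]
  simp only [lintegral_const, measure_univ, mul_one]
  exact ENNReal.mul_ne_top ENNReal.ofReal_ne_top
    (ENNReal.add_ne_top.2 ⟨ENNReal.ofReal_ne_top, h⟩)

include hXm in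
/-- Main formula: `F_X^{(m+1)}(t) = E[((t-X)₊)^m]/m!` (lintegral form). -/
lemma repInt_eq (m : ℕ) (hm : 1 ≤ m)
    (hfin : ∫⁻ ω, ENNReal.ofReal (max (-X ω) 0 ^ m) ∂μ ≠ ⊤) (t : ℝ) :
    repInt μ X (m + 1) t =
      (∫⁻ ω, ENNReal.ofReal (max (t - X ω) 0 ^ m) ∂μ).toReal / (Nat.factorial m : ℝ) := by
  induction m, hm using Nat.le_induction generalizing t with
  | base =>
    -- repInt μ X 2 t = ∫ y in Iic t, (μ {X ≤ y}).toReal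
    show (∫ y in Set.Iic t, repInt μ X 1 y) = _
    have hrw : ∀ y : ℝ, repInt μ X 1 y = (μ {ω | X ω ≤ y}).toReal := fun y => rfl
    simp only [hrw]
    have hmono : Monotone fun y : ℝ => μ {ω | X ω ≤ y} := by
      intro y z hyz
      exact measure_mono (fun ω (h : X ω ≤ y) => le_trans h hyz)
    rw [integral_toReal (hmono.measurable.aemeasurable)
      (ae_of_all _ fun y => measure_lt_top μ _)]
    have hswap : ∫⁻ y in Set.Iic t, μ {ω | X ω ≤ y} =
        ∫⁻ ω, ENNReal.ofReal (max (t - X ω) 0 ^ 1) ∂μ := by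
      have h1 : ∀ y : ℝ, μ {ω | X ω ≤ y} =
          ∫⁻ ω, (Set.Ici (X ω)).indicator (fun _ => (1:ENNReal)) y ∂μ := by
        intro y
        rw [← lintegral_indicator_one (measurableSet_le hXm measurable_const)]
        refine lintegral_congr fun ω => ?_
        simp only [Set.indicator_apply, Set.mem_setOf_eq, Set.mem_Ici, Set.mem_preimage,
          Set.mem_Iic, Pi.one_apply]
      simp only [h1]
      rw [lintegral_lintegral_swap]
      · refine lintegral_congr fun ω => ?_
        have : ∫⁻ y in Set.Iic t, (Set.Ici (X ω)).indicator (fun _ => (1:ENNReal)) y =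
            (volume.restrict (Set.Iic t)) (Set.Ici (X ω)) := by
          rw [← lintegral_indicator_one measurableSet_Ici]
          rfl
        rw [this, Measure.restrict_apply measurableSet_Ici, Set.Ici_inter_Iic,
          Real.volume_Icc, pow_one, ofReal_max]
      · have : Measurable fun p : ℝ × Ω =>
            (Set.Ici (X p.2)).indicator (fun _ => (1:ENNReal)) p.1 := by
          have hset : MeasurableSet {p : ℝ × Ω | X p.2 ≤ p.1} :=
            measurableSet_le (hXm.comp measurable_snd) measurable_fst
          have : (fun p : ℝ × Ω => (Set.Ici (X p.2)).indicator (fun _ => (1:ENNReal)) p.1) =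
              {p : ℝ × Ω | X p.2 ≤ p.1}.indicator (fun _ => (1:ENNReal)) := by
            funext p
            simp only [Set.indicator_apply, Set.mem_Ici, Set.mem_setOf_eq]
          rw [this]
          exact measurable_const.indicator hset
        exact this.aemeasurable
    rw [hswap]
    simp [Nat.factorial]
  | succ m hm ih =>
    have hfin' : ∫⁻ ω, ENNReal.ofReal (max (-X ω) 0 ^ m) ∂μ ≠ ⊤ := fin_step μ m hfin
    have hdef : repInt μ X (m + 1 + 1) t = ∫ (y : ℝ) in Set.Iic t, repInt μ X (m + 1) y := rfl
    rw [hdef]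
    have hstep : ∀ y : ℝ, repInt μ X (m + 1) y =
        (∫⁻ ω, ENNReal.ofReal (max (y - X ω) 0 ^ m) ∂μ).toReal / (Nat.factorial m : ℝ) :=
      fun y => ih hfin' y
    simp only [hstep]
    rw [integral_div]
    have hunc : Measurable fun p : ℝ × Ω => ENNReal.ofReal (max (p.1 - X p.2) 0 ^ m) :=
      (((measurable_fst.sub (hXm.comp measurable_snd)).max measurable_const).pow_const m).ennreal_ofReal
    have hmeasG : Measurable fun y : ℝ =>
        ∫⁻ ω, ENNReal.ofReal (max (y - X ω) 0 ^ m) ∂μ :=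
      Measurable.lintegral_prod_right hunc
    rw [integral_toReal hmeasG.aemeasurable
      (ae_of_all _ fun y => lt_top_iff_ne_top.2 (G_fin μ m y hfin'))]
    have hswap : ∫⁻ y in Set.Iic t, ∫⁻ ω, ENNReal.ofReal (max (y - X ω) 0 ^ m) ∂μ =
        ∫⁻ ω, (∫⁻ y in Set.Iic t, ENNReal.ofReal (max (y - X ω) 0 ^ m)) ∂μ :=
      lintegral_lintegral_swap hunc.aemeasurable
    rw [hswap]
    have hinner : ∀ ω, ∫⁻ y in Set.Iic t, ENNReal.ofReal (max (y - X ω) 0 ^ m) =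
        ENNReal.ofReal (max (t - X ω) 0 ^ (m + 1)) / ENNReal.ofReal (m + 1) := by
      intro ω
      rw [inner_int m hm (X ω) t, ENNReal.ofReal_div_of_pos (by positivity)]
    simp only [hinner]
    have hdiv : ∀ ω, ENNReal.ofReal (max (t - X ω) 0 ^ (m + 1)) / ENNReal.ofReal (m + 1) =
        ENNReal.ofReal (max (t - X ω) 0 ^ (m + 1)) * (ENNReal.ofReal (m + 1))⁻¹ := by
      intro ω; rw [div_eq_mul_inv]
    simp only [hdiv]
    rw [lintegral_mul_const _
      (show Measurable fun ω => ENNReal.ofReal (max (t - X ω) 0 ^ (m + 1)) from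
        (((measurable_const.sub hXm).max measurable_const).pow_const (m + 1)).ennreal_ofReal)]
    rw [ENNReal.toReal_mul]
    have h1 : (ENNReal.ofReal ((m:ℝ) + 1))⁻¹.toReal = ((m:ℝ) + 1)⁻¹ := by
      rw [ENNReal.toReal_inv, ENNReal.toReal_ofReal (by positivity)]
    rw [h1]
    have hfact : (Nat.factorial (m + 1) : ℝ) = ((m:ℝ) + 1) * (Nat.factorial m : ℝ) := by
      rw [Nat.factorial_succ]; push_cast; ring
    rw [hfact]
    have hm1 : ((m:ℝ) + 1) ≠ 0 := by positivity
    have hmf : (Nat.factorial m : ℝ) ≠ 0 := Nat.cast_ne_zero.2 (Nat.factorial_ne_zero m)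
    field_simp

include hXm in
/-- Real-integral version of the main formula. -/
lemma repInt_eq' (m : ℕ) (hm : 1 ≤ m)
    (hint : Integrable (fun ω => max (-X ω) 0 ^ m) μ) (t : ℝ) :
    repInt μ X (m + 1) t =
      (∫ ω, max (t - X ω) 0 ^ m ∂μ) / (Nat.factorial m : ℝ) := by
  have hfin : ∫⁻ ω, ENNReal.ofReal (max (-X ω) 0 ^ m) ∂μ ≠ ⊤ :=
    hint.lintegral_lt_top.ne
  rw [repInt_eq μ hXm m hm hfin t]
  congr 1
  rw [integral_eq_lintegral_of_nonneg_ae (ae_of_all _ fun ω => by positivity)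
    (show AEStronglyMeasurable (fun ω => max (t - X ω) 0 ^ m) μ from
      (((measurable_const.sub hXm).max measurable_const).pow_const m).aestronglyMeasurable)]

end Stmt5Aux

/-- `F_X^{(k)}(t) = E[((t−X)₊)^{k−1}]/(k−1)!`, and consequently the comparison of
`k`-th repeated integrals is equivalent to the comparison of the `(k−1)`-norms of the
positive parts. -/
theorem stmt5 {Ω : Type*} [MeasurableSpace Ω] (μ : Measure Ω) [IsProbabilityMeasure μ]
    (k : ℕ) (hk : 2 ≤ k) (X Y : Ω → ℝ) (hXm : Measurable X) (hYm : Measurable Y)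
    (hX : Integrable (fun ω => max (-X ω) 0 ^ (k - 1)) μ)
    (hY : Integrable (fun ω => max (-Y ω) 0 ^ (k - 1)) μ) :
    (∀ t : ℝ, repInt μ X k t =
      (∫ ω, max (t - X ω) 0 ^ (k - 1) ∂μ) / (Nat.factorial (k - 1) : ℝ)) ∧
    ((∀ t : ℝ, repInt μ Y k t ≤ repInt μ X k t) ↔
      ∀ t : ℝ, pnorm μ ((k : ℝ) - 1) (fun ω => max (t - Y ω) 0) ≤
        pnorm μ ((k : ℝ) - 1) (fun ω => max (t - X ω) 0)) := by
  obtain ⟨m, rfl⟩ : ∃ m, k = m + 1 := ⟨k - 1, by omega⟩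
  have hm : 1 ≤ m := by omega
  simp only [Nat.add_sub_cancel] at hX hY ⊢
  have hXf : ∀ t, repInt μ X (m + 1) t =
      (∫ ω, max (t - X ω) 0 ^ m ∂μ) / (Nat.factorial m : ℝ) :=
    fun t => Stmt5Aux.repInt_eq' μ hXm m hm hX t
  have hYf : ∀ t, repInt μ Y (m + 1) t =
      (∫ ω, max (t - Y ω) 0 ^ m ∂μ) / (Nat.factorial m : ℝ) :=
    fun t => Stmt5Aux.repInt_eq' μ hYm m hm hY t
  refine ⟨hXf, ?_⟩
  -- pnorm rewriting
  have hp : ((m + 1 : ℕ) : ℝ) - 1 = (m : ℝ) := by push_cast; ring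
  have hpnorm : ∀ (Z : Ω → ℝ) (t : ℝ),
      pnorm μ (((m + 1 : ℕ) : ℝ) - 1) (fun ω => max (t - Z ω) 0) =
        (∫ ω, max (t - Z ω) 0 ^ m ∂μ) ^ ((m : ℝ))⁻¹ := by
    intro Z t
    unfold pnorm
    rw [hp]
    congr 1
    · refine integral_congr_ae (ae_of_all _ fun ω => ?_)
      dsimp only
      rw [abs_of_nonneg (le_max_right _ _), Real.rpow_natCast]
    · rw [one_div]
  have hmpos : (0:ℝ) < (m : ℝ) := by exact_mod_cast hm
  constructor
  · intro h t
    rw [hpnorm, hpnorm]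
    have h' := h t
    rw [hXf t, hYf t] at h'
    have hfpos : (0:ℝ) < (Nat.factorial m : ℝ) := by
      exact_mod_cast Nat.factorial_pos m
    have hle : (∫ ω, max (t - Y ω) 0 ^ m ∂μ) ≤ ∫ ω, max (t - X ω) 0 ^ m ∂μ :=
      (div_le_div_iff_of_pos_right hfpos).1 h'
    exact Real.rpow_le_rpow (integral_nonneg fun ω => by positivity) hle
      (by positivity)
  · intro h t
    have h' := h t
    rw [hpnorm, hpnorm] at h'
    rw [hXf t, hYf t]
    have hfpos : (0:ℝ) < (Nat.factorial m : ℝ) := by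
      exact_mod_cast Nat.factorial_pos m
    rw [div_le_div_iff_of_pos_right hfpos]
    have hIY : (0:ℝ) ≤ ∫ ω, max (t - Y ω) 0 ^ m ∂μ := integral_nonneg fun ω => by positivity
    have hIX : (0:ℝ) ≤ ∫ ω, max (t - X ω) 0 ^ m ∂μ := integral_nonneg fun ω => by positivity
    have := Real.rpow_le_rpow (by positivity) h' hmpos.le
    rwa [← Real.rpow_mul hIY, ← Real.rpow_mul hIX, inv_mul_cancel₀ hmpos.ne',
      Real.rpow_one, Real.rpow_one] at this
end

section
/- Let (Ω, F, P) be a probability space, p ∈ [1, ∞), Y ∈ L^p(P), and β₀ ∈ (0, 1). Suppose t* ∈ ℝ attains the infimum defining R_{β₀}(Y), and suppose the function β ↦ R_β(Y) is differentiable at β₀. Then its derivative at β₀ equals (R_{β₀}(Y) − t*) / (1 − β₀). -/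
open MeasureTheory

/-- The higher-order risk measure `R_β(Y) = inf_t [ t + (1−β)⁻¹ ‖(Y − t)₊‖_p ]`. -/
noncomputable def riskR {Ω : Type*} [MeasurableSpace Ω] (μ : Measure Ω) (p : ℝ) (β : ℝ)
    (Y : Ω → ℝ) : ℝ :=
  ⨅ t : ℝ, (t + (1 - β)⁻¹ * pnorm μ p (fun ω => max (Y ω - t) 0))

/-- Lower bound on the objective: for `s ≥ 1`, each candidate value is `≥ ∫ Y`. -/
theorem pnorm_obj_lower_bound {Ω : Type*} [MeasurableSpace Ω] (μ : Measure Ω)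
    [IsProbabilityMeasure μ] (p : ℝ) (hp : 1 ≤ p) (Y : Ω → ℝ)
    (hY : MemLp Y (ENNReal.ofReal p) μ) (t s : ℝ) (hs : 1 ≤ s) :
    (∫ ω, Y ω ∂μ) ≤ t + s * pnorm μ p (fun ω => max (Y ω - t) 0) := by
  set Z : Ω → ℝ := fun ω => max (Y ω - t) 0 with hZdef
  have hp0 : 0 < p := lt_of_lt_of_le one_pos hp
  have hp'0 : (ENNReal.ofReal p) ≠ 0 := by
    simp [ENNReal.ofReal_eq_zero]; linarith
  have hp't : (ENNReal.ofReal p) ≠ ⊤ := ENNReal.ofReal_ne_top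
  have hp'1 : (1 : ENNReal) ≤ ENNReal.ofReal p := by
    rw [← ENNReal.ofReal_one]; exact ENNReal.ofReal_le_ofReal hp
  have hZ : MemLp Z (ENNReal.ofReal p) μ := (hY.sub (memLp_const t)).pos_part
  have hZ1 : MemLp Z 1 μ := hZ.mono_exponent hp'1
  have hYint : Integrable Y μ := by
    exact memLp_one_iff_integrable.mp (hY.mono_exponent hp'1)
  -- pnorm is nonneg
  have hpn : 0 ≤ pnorm μ p Z := by
    unfold pnorm
    apply Real.rpow_nonneg
    apply integral_nonneg
    intro ω
    positivity
  -- eLpNorm identities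
  have e2 : eLpNorm Z (ENNReal.ofReal p) μ = ENNReal.ofReal (pnorm μ p Z) := by
    rw [hZ.eLpNorm_eq_integral_rpow_norm hp'0 hp't]
    unfold pnorm
    rw [ENNReal.toReal_ofReal hp0.le]
    simp [Real.norm_eq_abs, one_div]
  have e1 : eLpNorm Z 1 μ = ENNReal.ofReal (∫ ω, Z ω ∂μ) := by
    rw [hZ1.eLpNorm_eq_integral_rpow_norm one_ne_zero ENNReal.one_ne_top]
    simp only [ENNReal.toReal_one, Real.rpow_one, inv_one]
    congr 1
    refine integral_congr_ae (Filter.Eventually.of_forall fun ω => ?_)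
    simp [hZdef, abs_of_nonneg (le_max_right (Y ω - t) 0)]
  -- ∫ Z ≤ pnorm
  have hZle : (∫ ω, Z ω ∂μ) ≤ pnorm μ p Z := by
    have := eLpNorm_le_eLpNorm_of_exponent_le hp'1 hZ.aestronglyMeasurable (μ := μ)
    rw [e1, e2] at this
    exact (ENNReal.ofReal_le_ofReal_iff hpn).mp this
  -- ∫ Y - t ≤ ∫ Z
  have hI : (∫ ω, Y ω ∂μ) - t ≤ ∫ ω, Z ω ∂μ := by
    have h1 : (∫ ω, Y ω ∂μ) - t = ∫ ω, (Y ω - t) ∂μ := by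
      rw [integral_sub hYint (integrable_const t)]
      simp
    rw [h1]
    refine integral_mono (hYint.sub (integrable_const t))
      (memLp_one_iff_integrable.mp hZ1) fun ω => le_max_left _ _
  have hc : (∫ ω, Y ω ∂μ) - t ≤ pnorm μ p Z := hI.trans hZle
  nlinarith [mul_nonneg (sub_nonneg.mpr hs) hpn]

/-- If `t*` attains the infimum defining `R_{β₀}(Y)` and `β ↦ R_β(Y)` is differentiable
at `β₀`, then its derivative there equals `(R_{β₀}(Y) − t*)/(1 − β₀)`. -/
theorem stmt8 {Ω : Type*} [MeasurableSpace Ω] (μ : Measure Ω) [IsProbabilityMeasure μ]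
    (p : ℝ) (hp : 1 ≤ p) (Y : Ω → ℝ) (hY : MemLp Y (ENNReal.ofReal p) μ)
    (β₀ : ℝ) (hβ₀ : β₀ ∈ Set.Ioo (0 : ℝ) 1) (tstar : ℝ)
    (hmin : riskR μ p β₀ Y = tstar + (1 - β₀)⁻¹ * pnorm μ p (fun ω => max (Y ω - tstar) 0))
    (hdiff : DifferentiableAt ℝ (fun β => riskR μ p β Y) β₀) :
    deriv (fun β => riskR μ p β Y) β₀ = (riskR μ p β₀ Y - tstar) / (1 - β₀) := by
  obtain ⟨hβ₀0, hβ₀1⟩ := hβ₀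
  have hne : (1 : ℝ) - β₀ ≠ 0 := by linarith
  set c : ℝ := pnorm μ p (fun ω => max (Y ω - tstar) 0) with hc
  -- the upper envelope
  set g : ℝ → ℝ := fun β => tstar + (1 - β)⁻¹ * c with hg
  -- upper bound on riskR on (0,1)
  have hub : ∀ β ∈ Set.Ioo (0:ℝ) 1, riskR μ p β Y ≤ g β := by
    intro β hβ
    have hs : 1 ≤ (1 - β)⁻¹ := by
      rw [le_inv_comm₀ one_pos (by linarith [hβ.2] : (0:ℝ) < 1 - β)]
      simp; linarith [hβ.1]
    have hbdd : BddBelow (Set.range fun t : ℝ =>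
        t + (1 - β)⁻¹ * pnorm μ p (fun ω => max (Y ω - t) 0)) := by
      refine ⟨∫ ω, Y ω ∂μ, ?_⟩
      rintro x ⟨t, rfl⟩
      exact pnorm_obj_lower_bound μ p hp Y hY t _ hs
    exact ciInf_le hbdd tstar
  -- local max of f - g at β₀
  have hmax : IsLocalMax (fun β => riskR μ p β Y - g β) β₀ := by
    have hnb : Set.Ioo (0:ℝ) 1 ∈ nhds β₀ :=
      isOpen_Ioo.mem_nhds ⟨hβ₀0, hβ₀1⟩
    refine Filter.eventually_of_mem hnb fun β hβ => ?_
    have h1 : riskR μ p β Y - g β ≤ 0 := sub_nonpos.mpr (hub β hβ)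
    have h2 : riskR μ p β₀ Y - g β₀ = 0 := by rw [hmin]; simp [hg]
    simpa [h2] using h1
  -- derivative of g
  have hgd : HasDerivAt g (((1 - β₀) ^ 2)⁻¹ * c) β₀ := by
    have h1 : HasDerivAt (fun β : ℝ => 1 - β) (-1) β₀ :=
      (hasDerivAt_id β₀).const_sub 1
    have h2 := h1.inv hne
    have h3 : HasDerivAt g (- -1 / (1 - β₀) ^ 2 * c) β₀ := (h2.mul_const c).const_add tstar
    convert h3 using 1
    rw [neg_neg, one_div]
  have hgdiff : DifferentiableAt ℝ g β₀ := hgd.differentiableAt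
  have hz : deriv (fun β => riskR μ p β Y - g β) β₀ = 0 := hmax.deriv_eq_zero
  rw [deriv_fun_sub hdiff hgdiff, hgd.deriv] at hz
  have hfd : deriv (fun β => riskR μ p β Y) β₀ = ((1 - β₀) ^ 2)⁻¹ * c := by linarith
  rw [hfd, hmin]
  field_simp
  ring
end

section
/- Let (Ω, F, P) be a probability space, p ∈ [1, ∞), Y ∈ L^p(P), and let 0 < β₀ < β₁ < 1. If t₀ ∈ ℝ attains the infimum defining R_{β₀}(Y) and t₁ ∈ ℝ attains the infimum defining R_{β₁}(Y), then t₀ ≤ t₁. In other words, any selection β ↦ t_Y(β) of minimizers of the higher-order risk measure is non-decreasing in the risk level β. -/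
open MeasureTheory


lemma pnorm_nonneg {Ω : Type*} [MeasurableSpace Ω] (μ : Measure Ω) (p : ℝ) (Z : Ω → ℝ) :
    0 ≤ (∫ ω, |Z ω| ^ p ∂μ) ^ (1 / p) :=
  Real.rpow_nonneg (integral_nonneg fun ω => by positivity) _

lemma key_lb {Ω : Type*} [MeasurableSpace Ω] (μ : Measure Ω) [IsProbabilityMeasure μ]
    (p : ℝ) (hp : 1 ≤ p) (Y : Ω → ℝ) (hY : MemLp Y (ENNReal.ofReal p) μ) (t : ℝ) :
    (∫ ω, Y ω ∂μ) - t ≤ (∫ ω, |max (Y ω - t) 0| ^ p ∂μ) ^ (1 / p) := by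
  have hp0 : 0 < p := lt_of_lt_of_le one_pos hp
  have hpne : ENNReal.ofReal p ≠ 0 := by
    simp [ENNReal.ofReal_eq_zero, not_le, hp0]
  have hp1le : (1 : ENNReal) ≤ ENNReal.ofReal p := by
    simpa using ENNReal.ofReal_le_ofReal hp
  set h : Ω → ℝ := fun ω => max (Y ω - t) 0 with hh
  have hYt : MemLp (fun ω => Y ω - t) (ENNReal.ofReal p) μ := hY.sub (memLp_const t)
  have hhm : MemLp h (ENNReal.ofReal p) μ := by
    refine hYt.of_le ?_ (Filter.Eventually.of_forall fun ω => ?_)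
    · exact hYt.aestronglyMeasurable.sup aestronglyMeasurable_const
    · simp only [h, Real.norm_eq_abs]
      rw [abs_of_nonneg (le_max_right _ _)]
      exact le_trans (max_le (le_abs_self _) (abs_nonneg _)) le_rfl
  have hh1 : MemLp h 1 μ := hhm.mono_exponent hp1le
  have hYint : Integrable Y μ := ((hY.mono_exponent hp1le)).integrable le_rfl
  -- eLpNorm comparisons
  have h1le : eLpNorm h 1 μ ≤ eLpNorm h (ENNReal.ofReal p) μ :=
    eLpNorm_le_eLpNorm_of_exponent_le hp1le hhm.aestronglyMeasurable
  have e1 : eLpNorm h 1 μ = ENNReal.ofReal (∫ ω, h ω ∂μ) := by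
    rw [hh1.eLpNorm_eq_integral_rpow_norm one_ne_zero ENNReal.one_ne_top]
    simp only [ENNReal.toReal_one, Real.rpow_one, inv_one]
    congr 1
    refine integral_congr_ae (Filter.Eventually.of_forall fun ω => ?_)
    simp [h, Real.norm_eq_abs, abs_of_nonneg (le_max_right (Y ω - t) 0)]
  have ep : eLpNorm h (ENNReal.ofReal p) μ
      = ENNReal.ofReal ((∫ ω, |h ω| ^ p ∂μ) ^ (1 / p)) := by
    rw [hhm.eLpNorm_eq_integral_rpow_norm hpne ENNReal.ofReal_ne_top]
    rw [ENNReal.toReal_ofReal hp0.le]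
    simp [Real.norm_eq_abs, one_div]
  have hintle : (∫ ω, Y ω ∂μ) - t ≤ ∫ ω, h ω ∂μ := by
    have : (∫ ω, Y ω ∂μ) - t = ∫ ω, (Y ω - t) ∂μ := by
      rw [integral_sub hYint (integrable_const t)]
      simp
    rw [this]
    exact integral_mono (hYint.sub (integrable_const t)) (hh1.integrable le_rfl)
      fun ω => le_max_left _ _
  refine le_trans hintle ?_
  have := le_trans (le_of_eq e1.symm) (le_trans h1le (le_of_eq ep))
  have := (ENNReal.ofReal_le_ofReal_iff (pnorm_nonneg μ p h)).mp this
  linarith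



lemma riskR_le {Ω : Type*} [MeasurableSpace Ω] (μ : Measure Ω) [IsProbabilityMeasure μ]
    (p : ℝ) (hp : 1 ≤ p) (Y : Ω → ℝ) (hY : MemLp Y (ENNReal.ofReal p) μ)
    (β : ℝ) (hβ0 : 0 < β) (hβ1 : β < 1) (t : ℝ) :
    riskR μ p β Y ≤ t + (1 - β)⁻¹ * pnorm μ p (fun ω => max (Y ω - t) 0) := by
  have hc : (1 : ℝ) ≤ (1 - β)⁻¹ := by
    rw [le_inv_comm₀ one_pos (by linarith)]
    · linarith
  refine ciInf_le ⟨∫ ω, Y ω ∂μ, ?_⟩ t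
  rintro x ⟨s, rfl⟩
  have h1 : (∫ ω, Y ω ∂μ) - s ≤ pnorm μ p (fun ω => max (Y ω - s) 0) :=
    key_lb μ p hp Y hY s
  have h2 : 0 ≤ pnorm μ p (fun ω => max (Y ω - s) 0) := pnorm_nonneg μ p _
  nlinarith

/-- Minimizers of the higher-order risk measure are non-decreasing in the risk level:
if `t₀` attains the infimum defining `R_{β₀}(Y)` and `t₁` that of `R_{β₁}(Y)` with
`β₀ < β₁`, then `t₀ ≤ t₁`. -/
theorem stmt9 {Ω : Type*} [MeasurableSpace Ω] (μ : Measure Ω) [IsProbabilityMeasure μ]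
    (p : ℝ) (hp : 1 ≤ p) (Y : Ω → ℝ) (hY : MemLp Y (ENNReal.ofReal p) μ)
    (β₀ β₁ : ℝ) (h0 : 0 < β₀) (h01 : β₀ < β₁) (h1 : β₁ < 1) (t₀ t₁ : ℝ)
    (hmin0 : riskR μ p β₀ Y = t₀ + (1 - β₀)⁻¹ * pnorm μ p (fun ω => max (Y ω - t₀) 0))
    (hmin1 : riskR μ p β₁ Y = t₁ + (1 - β₁)⁻¹ * pnorm μ p (fun ω => max (Y ω - t₁) 0)) :
    t₀ ≤ t₁ := by
  by_contra hlt
  push_neg at hlt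
  set g₀ := pnorm μ p (fun ω => max (Y ω - t₀) 0)
  set g₁ := pnorm μ p (fun ω => max (Y ω - t₁) 0)
  have hA : t₀ + (1 - β₀)⁻¹ * g₀ ≤ t₁ + (1 - β₀)⁻¹ * g₁ :=
    hmin0 ▸ riskR_le μ p hp Y hY β₀ h0 (by linarith) t₁
  have hB : t₁ + (1 - β₁)⁻¹ * g₁ ≤ t₀ + (1 - β₁)⁻¹ * g₀ :=
    hmin1 ▸ riskR_le μ p hp Y hY β₁ (by linarith) h1 t₀
  have hc0 : 0 < (1 - β₀)⁻¹ := inv_pos.mpr (by linarith)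
  have hc01 : (1 - β₀)⁻¹ < (1 - β₁)⁻¹ := by
    apply inv_strictAnti₀ <;> linarith
  -- Δ := g₁ - g₀ > 0 from hA; then hB gives contradiction
  nlinarith [mul_pos (sub_pos.mpr hc01) (sub_pos.mpr (by nlinarith : g₀ < g₁))]
end

section
/- Let (Ω, F, P) be a probability space, p ∈ [1, ∞), and X, Y ∈ L^p(P). Then the following are equivalent: (1) ‖(t − X)₊‖_p ≥ ‖(t − Y)₊‖_p for every t ∈ ℝ (i.e., X is stochastically dominated by Y with respect to ‖·‖_p); (2) R_β(−X) ≥ R_β(−Y) for every β ∈ (0, 1). -/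
open MeasureTheory

section Helpers
variable {Ω : Type*} [MeasurableSpace Ω] {μ : Measure Ω} [IsProbabilityMeasure μ]
variable {p : ℝ} {Z : Ω → ℝ}

lemma my_pnorm_nonneg (μ : Measure Ω) (p : ℝ) (W : Ω → ℝ) :
    0 ≤ (∫ ω, |W ω| ^ p ∂μ) ^ (1 / p) :=
  Real.rpow_nonneg (integral_nonneg fun ω => Real.rpow_nonneg (abs_nonneg _) _) _

lemma my_memPos (hZ : MemLp Z (ENNReal.ofReal p) μ) (s : ℝ) :
    MemLp (fun ω => max (s - Z ω) 0) (ENNReal.ofReal p) μ :=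
  ((memLp_const s).sub hZ).pos_part

lemma my_pnorm_eq (hp : 1 ≤ p) (hZ : MemLp Z (ENNReal.ofReal p) μ) (s : ℝ) :
    (∫ ω, |max (s - Z ω) 0| ^ p ∂μ) ^ (1 / p)
      = (eLpNorm (fun ω => max (s - Z ω) 0) (ENNReal.ofReal p) μ).toReal := by
  have hp0 : (0:ℝ) < p := lt_of_lt_of_le one_pos hp
  have h0 : (ENNReal.ofReal p) ≠ 0 := by simp [ENNReal.ofReal_eq_zero, not_le, hp0]
  have ht : (ENNReal.ofReal p) ≠ ⊤ := ENNReal.ofReal_ne_top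
  rw [MemLp.eLpNorm_eq_integral_rpow_norm h0 ht (my_memPos hZ s)]
  rw [ENNReal.toReal_ofReal (Real.rpow_nonneg (integral_nonneg fun ω => Real.rpow_nonneg (norm_nonneg _) _) _)]
  simp [Real.norm_eq_abs, ENNReal.toReal_ofReal hp0.le, one_div]

lemma my_g_mono (hp : 1 ≤ p) (hZ : MemLp Z (ENNReal.ofReal p) μ) {s t : ℝ} (hst : s ≤ t) :
    (∫ ω, |max (s - Z ω) 0| ^ p ∂μ) ^ (1 / p) ≤ (∫ ω, |max (t - Z ω) 0| ^ p ∂μ) ^ (1 / p) := by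
  rw [my_pnorm_eq hp hZ, my_pnorm_eq hp hZ]
  refine ENNReal.toReal_mono (my_memPos hZ t).eLpNorm_ne_top (eLpNorm_mono_real fun ω => ?_)
  rw [Real.norm_eq_abs, abs_of_nonneg (le_max_right _ _)]
  exact max_le_max (sub_le_sub_right hst _) le_rfl

lemma my_g_lip (hp : 1 ≤ p) (hZ : MemLp Z (ENNReal.ofReal p) μ) {s t : ℝ} (hst : s ≤ t) :
    (∫ ω, |max (t - Z ω) 0| ^ p ∂μ) ^ (1 / p)
      ≤ (∫ ω, |max (s - Z ω) 0| ^ p ∂μ) ^ (1 / p) + (t - s) := by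
  have hp0 : (0:ℝ) < p := lt_of_lt_of_le one_pos hp
  have h0 : (ENNReal.ofReal p) ≠ 0 := by simp [ENNReal.ofReal_eq_zero, not_le, hp0]
  have h1P : (1 : ENNReal) ≤ ENNReal.ofReal p := by
    rw [← ENNReal.ofReal_one]; exact ENNReal.ofReal_le_ofReal hp
  rw [my_pnorm_eq hp hZ, my_pnorm_eq hp hZ]
  have hmono : eLpNorm (fun ω => max (t - Z ω) 0) (ENNReal.ofReal p) μ
      ≤ eLpNorm (fun ω => max (s - Z ω) 0 + (t - s)) (ENNReal.ofReal p) μ := by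
    refine eLpNorm_mono_real fun ω => ?_
    rw [Real.norm_eq_abs, abs_of_nonneg (le_max_right _ _)]
    rcases le_or_gt (t - Z ω) 0 with h | h
    · simp only [max_eq_right h]
      have := le_max_right (s - Z ω) 0
      linarith
    · rw [max_eq_left h.le]
      have := le_max_left (s - Z ω) 0
      linarith
  have hadd : eLpNorm (fun ω => max (s - Z ω) 0 + (t - s)) (ENNReal.ofReal p) μ
      ≤ eLpNorm (fun ω => max (s - Z ω) 0) (ENNReal.ofReal p) μ + ENNReal.ofReal (t - s) := by
    have := eLpNorm_add_le (my_memPos hZ s).aestronglyMeasurable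
      (aestronglyMeasurable_const : AEStronglyMeasurable (fun _ : Ω => (t - s)) μ) h1P
    refine le_trans this ?_
    gcongr
    rw [eLpNorm_const _ h0 (IsProbabilityMeasure.ne_zero μ)]
    simp [Real.nnnorm_of_nonneg (sub_nonneg.mpr hst), ENNReal.ofReal,
      Real.toNNReal_of_nonneg (sub_nonneg.mpr hst)]
  calc (eLpNorm (fun ω => max (t - Z ω) 0) (ENNReal.ofReal p) μ).toReal
      ≤ (eLpNorm (fun ω => max (s - Z ω) 0) (ENNReal.ofReal p) μ + ENNReal.ofReal (t - s)).toReal := by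
        refine ENNReal.toReal_mono ?_ (hmono.trans hadd)
        exact ENNReal.add_ne_top.mpr ⟨(my_memPos hZ s).eLpNorm_ne_top, ENNReal.ofReal_ne_top⟩
    _ = _ := by
        rw [ENNReal.toReal_add (my_memPos hZ s).eLpNorm_ne_top ENNReal.ofReal_ne_top,
          ENNReal.toReal_ofReal (sub_nonneg.mpr hst)]

lemma my_g_convex (hp : 1 ≤ p) (hZ : MemLp Z (ENNReal.ofReal p) μ) :
    ConvexOn ℝ Set.univ (fun s => (∫ ω, |max (s - Z ω) 0| ^ p ∂μ) ^ (1 / p)) := by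
  have hp0 : (0:ℝ) < p := lt_of_lt_of_le one_pos hp
  have h1P : (1 : ENNReal) ≤ ENNReal.ofReal p := by
    rw [← ENNReal.ofReal_one]; exact ENNReal.ofReal_le_ofReal hp
  refine ⟨convex_univ, fun a _ b _ la lb hla hlb hab => ?_⟩
  simp only [smul_eq_mul, my_pnorm_eq hp hZ]
  have hpt : eLpNorm (fun ω => max (la * a + lb * b - Z ω) 0) (ENNReal.ofReal p) μ
      ≤ eLpNorm (la • (fun ω => max (a - Z ω) 0) + lb • (fun ω => max (b - Z ω) 0))
          (ENNReal.ofReal p) μ := by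
    refine eLpNorm_mono_real fun ω => ?_
    simp only [Pi.add_apply, Pi.smul_apply, smul_eq_mul]
    rw [Real.norm_eq_abs, abs_of_nonneg (le_max_right _ _)]
    refine max_le ?_ (by positivity)
    have h1 : la * (a - Z ω) ≤ la * max (a - Z ω) 0 :=
      mul_le_mul_of_nonneg_left (le_max_left _ _) hla
    have h2 : lb * (b - Z ω) ≤ lb * max (b - Z ω) 0 :=
      mul_le_mul_of_nonneg_left (le_max_left _ _) hlb
    have h3 : la * a + lb * b - Z ω = la * (a - Z ω) + lb * (b - Z ω) := by
      linear_combination (Z ω) * hab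
    linarith
  have hadd : eLpNorm (la • (fun ω => max (a - Z ω) 0) + lb • (fun ω => max (b - Z ω) 0))
        (ENNReal.ofReal p) μ
      ≤ ENNReal.ofReal la * eLpNorm (fun ω => max (a - Z ω) 0) (ENNReal.ofReal p) μ
        + ENNReal.ofReal lb * eLpNorm (fun ω => max (b - Z ω) 0) (ENNReal.ofReal p) μ := by
    refine le_trans (eLpNorm_add_le ((my_memPos hZ a).aestronglyMeasurable.const_smul la)
      ((my_memPos hZ b).aestronglyMeasurable.const_smul lb) h1P) ?_
    rw [eLpNorm_const_smul, eLpNorm_const_smul]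
    gcongr
    · rw [← Real.enorm_eq_ofReal hla]
    · rw [← Real.enorm_eq_ofReal hlb]
  have hfin : ENNReal.ofReal la * eLpNorm (fun ω => max (a - Z ω) 0) (ENNReal.ofReal p) μ
        + ENNReal.ofReal lb * eLpNorm (fun ω => max (b - Z ω) 0) (ENNReal.ofReal p) μ ≠ ⊤ := by
    refine ENNReal.add_ne_top.mpr ⟨?_, ?_⟩ <;>
      exact ENNReal.mul_ne_top ENNReal.ofReal_ne_top (MemLp.eLpNorm_ne_top (my_memPos hZ _))
  calc (eLpNorm (fun ω => max (la * a + lb * b - Z ω) 0) (ENNReal.ofReal p) μ).toReal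
      ≤ (ENNReal.ofReal la * eLpNorm (fun ω => max (a - Z ω) 0) (ENNReal.ofReal p) μ
        + ENNReal.ofReal lb * eLpNorm (fun ω => max (b - Z ω) 0) (ENNReal.ofReal p) μ).toReal :=
        ENNReal.toReal_mono hfin (hpt.trans hadd)
    _ = _ := by
        rw [ENNReal.toReal_add (ENNReal.mul_ne_top ENNReal.ofReal_ne_top
            (MemLp.eLpNorm_ne_top (my_memPos hZ _))) (ENNReal.mul_ne_top ENNReal.ofReal_ne_top
            (MemLp.eLpNorm_ne_top (my_memPos hZ _))),
          ENNReal.toReal_mul, ENNReal.toReal_mul,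
          ENNReal.toReal_ofReal hla, ENNReal.toReal_ofReal hlb]

lemma my_g_lb (hp : 1 ≤ p) (hZ : MemLp Z (ENNReal.ofReal p) μ) (s : ℝ) :
    s - ∫ ω, Z ω ∂μ ≤ (∫ ω, |max (s - Z ω) 0| ^ p ∂μ) ^ (1 / p) := by
  have hp0 : (0:ℝ) < p := lt_of_lt_of_le one_pos hp
  have h1P : (1 : ENNReal) ≤ ENNReal.ofReal p := by
    rw [← ENNReal.ofReal_one]; exact ENNReal.ofReal_le_ofReal hp
  have hm1 : MemLp (fun ω => max (s - Z ω) 0) 1 μ :=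
    (my_memPos hZ s).mono_exponent h1P
  have h1eq : (eLpNorm (fun ω => max (s - Z ω) 0) 1 μ).toReal
      = ∫ ω, max (s - Z ω) 0 ∂μ := by
    rw [MemLp.eLpNorm_eq_integral_rpow_norm one_ne_zero ENNReal.one_ne_top hm1]
    simp only [ENNReal.toReal_one, Real.rpow_one, inv_one]
    rw [ENNReal.toReal_ofReal (integral_nonneg fun ω => norm_nonneg _)]
    congr 1; funext ω
    rw [Real.norm_eq_abs, abs_of_nonneg (le_max_right _ _)]
  have hint : s - ∫ ω, Z ω ∂μ ≤ ∫ ω, max (s - Z ω) 0 ∂μ := by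
    have hZi : Integrable Z μ := hZ.integrable h1P
    have : ∫ ω, (s - Z ω) ∂μ = s - ∫ ω, Z ω ∂μ := by
      rw [integral_sub (integrable_const s) hZi]; simp
    rw [← this]
    exact integral_mono ((integrable_const s).sub hZi) (hm1.integrable le_rfl)
      fun ω => le_max_left _ _
  rw [my_pnorm_eq hp hZ, ← h1eq] at *
  refine le_trans hint ?_
  exact ENNReal.toReal_mono (my_memPos hZ s).eLpNorm_ne_top
    (eLpNorm_le_eLpNorm_of_exponent_le h1P (my_memPos hZ s).aestronglyMeasurable)

lemma my_g_inf (hp : 1 ≤ p) (hZ : MemLp Z (ENNReal.ofReal p) μ) {η : ℝ} (hη : 0 < η) :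
    ∃ s : ℝ, (∫ ω, |max (s - Z ω) 0| ^ p ∂μ) ^ (1 / p) < η := by
  have hp0 : (0:ℝ) < p := lt_of_lt_of_le one_pos hp
  have h0 : (ENNReal.ofReal p) ≠ 0 := by simp [ENNReal.ofReal_eq_zero, not_le, hp0]
  have ht : (ENNReal.ofReal p) ≠ ⊤ := ENNReal.ofReal_ne_top
  have key : Filter.Tendsto (fun n : ℕ => ∫ ω, |max (-(n:ℝ) - Z ω) 0| ^ p ∂μ)
      Filter.atTop (nhds 0) := by
    have key0 : Filter.Tendsto (fun n : ℕ => ∫ ω, |max (-(n:ℝ) - Z ω) 0| ^ p ∂μ)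
        Filter.atTop (nhds (∫ _ω, (0:ℝ) ∂μ)) := by
      refine MeasureTheory.tendsto_integral_of_dominated_convergence
        (fun ω => |max (0 - Z ω) 0| ^ p) (fun n => ?_) ?_ (fun n => ?_) ?_
      · have := ((my_memPos hZ (-(n:ℝ))).integrable_norm_rpow h0 ht).aestronglyMeasurable
        simpa [Real.norm_eq_abs, ENNReal.toReal_ofReal hp0.le] using this
      · have := (my_memPos hZ 0).integrable_norm_rpow h0 ht
        simpa [Real.norm_eq_abs, ENNReal.toReal_ofReal hp0.le] using this
      · refine Filter.Eventually.of_forall fun ω => ?_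
        rw [Real.norm_eq_abs, abs_of_nonneg (Real.rpow_nonneg (abs_nonneg _) _)]
        refine Real.rpow_le_rpow (abs_nonneg _) ?_ hp0.le
        rw [abs_of_nonneg (le_max_right _ _), abs_of_nonneg (le_max_right _ _)]
        exact max_le_max (by have : (0:ℝ) ≤ (n:ℝ) := Nat.cast_nonneg n; linarith) le_rfl
      · refine Filter.Eventually.of_forall fun ω => ?_
        obtain ⟨N, hN⟩ := exists_nat_ge (-Z ω)
        refine Filter.Tendsto.congr' ?_ tendsto_const_nhds
        filter_upwards [Filter.eventually_ge_atTop N] with n hn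
        have hle : -(n:ℝ) - Z ω ≤ 0 := by
          have : (N:ℝ) ≤ (n:ℝ) := Nat.cast_le.mpr hn
          linarith
        rw [max_eq_right hle]
        simp [Real.zero_rpow hp0.ne']
    simpa using key0
  have hev : ∀ᶠ n : ℕ in Filter.atTop, ∫ ω, |max (-(n:ℝ) - Z ω) 0| ^ p ∂μ < η ^ p :=
    key.eventually_lt_const (Real.rpow_pos_of_pos hη p)
  obtain ⟨n, hn⟩ := hev.exists
  refine ⟨-(n:ℝ), ?_⟩
  have hnn : 0 ≤ ∫ ω, |max (-(n:ℝ) - Z ω) 0| ^ p ∂μ :=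
    integral_nonneg fun ω => Real.rpow_nonneg (abs_nonneg _) _
  calc (∫ ω, |max (-(n:ℝ) - Z ω) 0| ^ p ∂μ) ^ (1 / p)
      < (η ^ p) ^ (1 / p) := by
        exact Real.rpow_lt_rpow hnn hn (by positivity)
    _ = η := by
        rw [one_div, Real.rpow_rpow_inv hη.le hp0.ne']

lemma my_subgrad (g : ℝ → ℝ) (hnn : ∀ s, 0 ≤ g s) (hmono : Monotone g)
    (hconv : ConvexOn ℝ Set.univ g)
    (hlip : ∀ s t : ℝ, s ≤ t → g t ≤ g s + (t - s))
    (hinf : ∀ η, 0 < η → ∃ s, g s < η)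
    (t : ℝ) (ht : 0 < g t) {ε : ℝ} (hε : 0 < ε) :
    ∃ u : ℝ, 0 < u ∧ u < 1 ∧ ∀ s, g t + u * (s - t) - ε * u ≤ g s := by
  obtain ⟨s₁, hs₁⟩ := hinf (g t) ht
  have hs1t : s₁ < t := by
    by_contra hc
    push_neg at hc
    exact absurd (hmono hc) (not_le.mpr hs₁)
  set S : Set ℝ := (fun s => (g t - g s) / (t - s)) '' Set.Iio t with hS
  have hneS : S.Nonempty := ⟨_, ⟨s₁, hs1t, rfl⟩⟩
  have hbddS : BddAbove S := by
    refine ⟨1, ?_⟩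
    rintro x ⟨s, hs, rfl⟩
    have hst : s < t := Set.mem_Iio.mp hs
    rw [div_le_one (by linarith : (0:ℝ) < t - s)]
    have := hlip s t hst.le
    linarith
  set u₀ : ℝ := sSup S with hu₀
  have hqS : (g t - g s₁) / (t - s₁) ∈ S := ⟨s₁, hs1t, rfl⟩
  have hu₀pos : 0 < u₀ := by
    have hq : 0 < (g t - g s₁) / (t - s₁) := div_pos (by linarith) (by linarith)
    exact lt_of_lt_of_le hq (le_csSup hbddS hqS)
  have hu₀le1 : u₀ ≤ 1 := csSup_le hneS (by
    rintro x ⟨s, hs, rfl⟩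
    have hst : s < t := Set.mem_Iio.mp hs
    rw [div_le_one (by linarith : (0:ℝ) < t - s)]
    have := hlip s t hst.le
    linarith)
  have hsub : ∀ s, g t + u₀ * (s - t) ≤ g s := by
    intro s
    rcases lt_trichotomy s t with hlt | heq | hgt
    · have hmem : (g t - g s) / (t - s) ∈ S := ⟨s, hlt, rfl⟩
      have h1 : (g t - g s) / (t - s) ≤ u₀ := le_csSup hbddS hmem
      rw [div_le_iff₀ (by linarith : (0:ℝ) < t - s)] at h1
      nlinarith
    · subst heq; simp
    · have h1 : u₀ ≤ (g s - g t) / (s - t) := by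
        refine csSup_le hneS ?_
        rintro x ⟨s', hs', rfl⟩
        simp only [Set.mem_Iio] at hs'
        have h2 := hconv.slope_mono_adjacent (Set.mem_univ s') (Set.mem_univ s) hs' hgt
        exact h2
      rw [le_div_iff₀ (by linarith : (0:ℝ) < s - t)] at h1
      nlinarith
  set δ : ℝ := min (1/2) (ε * u₀ / (8 * g t)) with hδ
  have hδpos : 0 < δ := lt_min (by norm_num) (div_pos (mul_pos hε hu₀pos) (by linarith))
  have hδhalf : δ ≤ 1/2 := min_le_left _ _
  have h8 : δ * (8 * g t) ≤ ε * u₀ := by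
    have := min_le_right (1/2) (ε * u₀ / (8 * g t))
    calc δ * (8 * g t) ≤ (ε * u₀ / (8 * g t)) * (8 * g t) := by
          apply mul_le_mul_of_nonneg_right this (by positivity)
      _ = ε * u₀ := by field_simp
  refine ⟨(1 - δ) * u₀, mul_pos (by linarith) hu₀pos, ?_, ?_⟩
  · have := mul_le_mul_of_nonneg_left hu₀le1 (by linarith : (0:ℝ) ≤ 1 - δ)
    nlinarith
  · intro s
    rcases le_or_gt t s with hts | hst
    · have h1 := hsub s
      have h2 : 0 ≤ δ * u₀ * (s - t) :=
        mul_nonneg (mul_nonneg hδpos.le hu₀pos.le) (sub_nonneg.mpr hts)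
      have h3 : 0 ≤ ε * ((1 - δ) * u₀) :=
        mul_nonneg hε.le (mul_nonneg (by linarith) hu₀pos.le)
      nlinarith
    · rcases le_or_gt ((1 - δ) * u₀ * (t - s)) (g t) with hcase | hcase
      · have h1 := hsub s
        have hd : 0 < t - s := by linarith
        have h2 : u₀ * (t - s) ≤ 2 * g t := by nlinarith
        have k1 : δ * (u₀ * (t - s)) ≤ δ * (2 * g t) :=
          mul_le_mul_of_nonneg_left h2 hδpos.le
        have k2 : δ * (2 * g t) ≤ ε * u₀ / 4 := by linarith
        have k3 : ε * u₀ / 4 ≤ ε * (1 - δ) * u₀ := by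
          have := mul_le_mul_of_nonneg_left hδhalf (mul_pos hε hu₀pos).le
          nlinarith
        nlinarith
      · have h0 := hnn s
        have hεu : 0 < ε * ((1 - δ) * u₀) :=
          mul_pos hε (mul_pos (by linarith) hu₀pos)
        nlinarith

lemma my_bdd (hp : 1 ≤ p) (hZ : MemLp Z (ENNReal.ofReal p) μ) {c : ℝ} (hc : 1 ≤ c) (t' : ℝ) :
    -(∫ ω, Z ω ∂μ) ≤ t' + c * (∫ ω, |max (-t' - Z ω) 0| ^ p ∂μ) ^ (1 / p) := by
  have hg : 0 ≤ (∫ ω, |max (-t' - Z ω) 0| ^ p ∂μ) ^ (1 / p) :=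
    my_pnorm_nonneg μ p (fun ω => max (-t' - Z ω) 0)
  have hlb := my_g_lb hp hZ (-t')
  rcases le_or_gt (-t') (∫ ω, Z ω ∂μ) with hca | hca
  · nlinarith
  · nlinarith [mul_nonneg (sub_nonneg.mpr hc) hg]

end Helpers

/-- Stochastic dominance with respect to `‖·‖_p` is equivalent to the comparison of the
higher-order risk measures of the negatives at every risk level `β ∈ (0,1)`:
`‖(t−X)₊‖_p ≥ ‖(t−Y)₊‖_p` for all `t` iff `R_β(−X) ≥ R_β(−Y)` for all `β ∈ (0,1)`. -/
theorem stmt11 {Ω : Type*} [MeasurableSpace Ω] (μ : Measure Ω) [IsProbabilityMeasure μ]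
    (p : ℝ) (hp : 1 ≤ p) (X Y : Ω → ℝ)
    (hX : MemLp X (ENNReal.ofReal p) μ) (hY : MemLp Y (ENNReal.ofReal p) μ) :
    (∀ t : ℝ, pnorm μ p (fun ω => max (t - Y ω) 0) ≤ pnorm μ p (fun ω => max (t - X ω) 0)) ↔
      (∀ β ∈ Set.Ioo (0 : ℝ) 1,
        riskR μ p β (fun ω => -Y ω) ≤ riskR μ p β (fun ω => -X ω)) := by
  have hp0 : (0:ℝ) < p := lt_of_lt_of_le one_pos hp
  have hrisk : ∀ (Z : Ω → ℝ) (β : ℝ), riskR μ p β (fun ω => -Z ω)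
      = ⨅ t' : ℝ, (t' + (1 - β)⁻¹ * pnorm μ p (fun ω => max (-t' - Z ω) 0)) := by
    intro Z β
    unfold riskR
    refine iInf_congr fun t' => ?_
    have hfun : (fun ω => max (-Z ω - t') 0) = (fun ω => max (-t' - Z ω) 0) :=
      funext fun ω => by rw [show -Z ω - t' = -t' - Z ω by ring]
    simp only [hfun]
  constructor
  · intro h β hβ
    obtain ⟨hβ0, hβ1⟩ := hβ
    have hc0 : (0:ℝ) < 1 - β := by linarith
    have hcpos : (0:ℝ) < (1 - β)⁻¹ := inv_pos.mpr hc0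
    have hc1 : (1:ℝ) ≤ (1 - β)⁻¹ := by
      have h' : (1 - β) * (1 - β)⁻¹ = 1 := mul_inv_cancel₀ hc0.ne'
      nlinarith
    rw [hrisk, hrisk]
    refine ciInf_mono ⟨-(∫ ω, Y ω ∂μ), ?_⟩ fun t' => ?_
    · rintro x ⟨t', rfl⟩
      exact my_bdd hp hY hc1 t'
    · exact add_le_add_right (mul_le_mul_of_nonneg_left (h (-t')) hcpos.le) t'
  · intro h t
    have hXnn : 0 ≤ pnorm μ p (fun ω => max (t - X ω) 0) := my_pnorm_nonneg μ p _
    rcases le_or_gt (pnorm μ p (fun ω => max (t - Y ω) 0)) 0 with h0 | h0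
    · linarith
    · refine le_of_forall_pos_le_add fun ε hε => ?_
      obtain ⟨u, hu0, hu1, hu⟩ := my_subgrad (fun s => pnorm μ p (fun ω => max (s - Y ω) 0))
        (fun s => my_pnorm_nonneg μ p _) (fun s t' hst => my_g_mono hp hY hst)
        (my_g_convex hp hY) (fun s t' hst => my_g_lip hp hY hst)
        (fun η hη => my_g_inf hp hY hη) t h0 hε
      have hβmem : (1 - u) ∈ Set.Ioo (0:ℝ) 1 := ⟨by linarith, by linarith⟩
      have hiu : (1 - (1 - u))⁻¹ = u⁻¹ := by norm_num
      have huinv : (0:ℝ) < u⁻¹ := inv_pos.mpr hu0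
      have huu : u⁻¹ * u = 1 := inv_mul_cancel₀ hu0.ne'
      have hRY : u⁻¹ * pnorm μ p (fun ω => max (t - Y ω) 0) - t - ε
          ≤ riskR μ p (1 - u) (fun ω => -Y ω) := by
        rw [hrisk]
        refine le_ciInf fun t' => ?_
        have h1 := hu (-t')
        have h2 : u⁻¹ * (pnorm μ p (fun ω => max (t - Y ω) 0) + u * (-t' - t) - ε * u)
            ≤ u⁻¹ * pnorm μ p (fun ω => max (-t' - Y ω) 0) :=
          mul_le_mul_of_nonneg_left h1 huinv.le
        have h3 : u⁻¹ * (pnorm μ p (fun ω => max (t - Y ω) 0) + u * (-t' - t) - ε * u)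
            = u⁻¹ * pnorm μ p (fun ω => max (t - Y ω) 0) + (-t' - t) - ε := by
          field_simp
        rw [hiu]
        linarith
      have hRX : riskR μ p (1 - u) (fun ω => -X ω)
          ≤ -t + u⁻¹ * pnorm μ p (fun ω => max (t - X ω) 0) := by
        rw [hrisk]
        have hb : BddBelow (Set.range fun t' =>
            t' + (1 - (1 - u))⁻¹ * pnorm μ p (fun ω => max (-t' - X ω) 0)) := by
          refine ⟨-(∫ ω, X ω ∂μ), ?_⟩
          rintro x ⟨t', rfl⟩
          rw [hiu]
          refine my_bdd hp hX ?_ t'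
          nlinarith [mul_pos huinv (show (0:ℝ) < 1 - u by linarith),
            mul_inv_cancel₀ hu0.ne']
        have := ciInf_le hb (-t)
        simpa [hiu, neg_neg] using this
      have hchain := le_trans hRY (le_trans (h (1 - u) hβmem) hRX)
      have h4 := mul_le_mul_of_nonneg_left
        (by linarith : u⁻¹ * pnorm μ p (fun ω => max (t - Y ω) 0)
          ≤ u⁻¹ * pnorm μ p (fun ω => max (t - X ω) 0) + ε) hu0.le
      have h5 : u * (u⁻¹ * pnorm μ p (fun ω => max (t - Y ω) 0))
          = pnorm μ p (fun ω => max (t - Y ω) 0) := by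
        rw [← mul_assoc, mul_inv_cancel₀ hu0.ne', one_mul]
      have h6 : u * (u⁻¹ * pnorm μ p (fun ω => max (t - X ω) 0) + ε)
          = pnorm μ p (fun ω => max (t - X ω) 0) + ε * u := by
        rw [mul_add, ← mul_assoc, mul_inv_cancel₀ hu0.ne', one_mul]
        ring
      rw [h5, h6] at h4
      nlinarith
end

section
/- Let (Ω, F, P) be a probability space, p ∈ [1, ∞), ξ₀ ∈ L^p(P), and let h : ℝ^d × Ω → ℝ be such that h(x, ·) ∈ L^p(P) for every x ∈ ℝ^d and, for P-almost every ω, the map x ↦ h(x, ω) is concave. Then the set C := { x ∈ ℝ^d : ‖(t − ξ₀)₊‖_p ≥ ‖(t − h(x, ·))₊‖_p for all t ∈ ℝ } is a convex subset of ℝ^d. -/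
open MeasureTheory

lemma pnorm_eq_toReal_eLpNorm {Ω : Type*} [MeasurableSpace Ω] (μ : Measure Ω) {p : ℝ}
    (hp : 1 ≤ p) {f : Ω → ℝ} (hf : MemLp f (ENNReal.ofReal p) μ) :
    pnorm μ p f = (eLpNorm f (ENNReal.ofReal p) μ).toReal := by
  have hp0 : 0 < p := lt_of_lt_of_le one_pos hp
  rw [hf.eLpNorm_eq_integral_rpow_norm (by simp [hp0]) (by simp)]
  rw [ENNReal.toReal_ofReal (by positivity)]
  simp [pnorm, ENNReal.toReal_ofReal hp0.le, Real.norm_eq_abs, one_div]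

/-- If `x ↦ h(x, ω)` is concave for a.e. `ω`, then the set of `x` for which `h(x, ·)`
stochastically dominates the benchmark `ξ₀` with respect to `‖·‖_p` is convex. -/
theorem stmt12 {Ω : Type*} [MeasurableSpace Ω] (μ : Measure Ω) [IsProbabilityMeasure μ]
    (p : ℝ) (hp : 1 ≤ p) (d : ℕ)
    (ξ₀ : Ω → ℝ) (hξ₀ : MemLp ξ₀ (ENNReal.ofReal p) μ)
    (h : (Fin d → ℝ) → Ω → ℝ)
    (hmem : ∀ x : Fin d → ℝ, MemLp (h x) (ENNReal.ofReal p) μ)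
    (hconc : ∀ᵐ ω ∂μ, ConcaveOn ℝ Set.univ (fun x : Fin d → ℝ => h x ω)) :
    Convex ℝ {x : Fin d → ℝ |
      ∀ t : ℝ, pnorm μ p (fun ω => max (t - h x ω) 0) ≤
        pnorm μ p (fun ω => max (t - ξ₀ ω) 0)} := by
  have hp0 : 0 < p := lt_of_lt_of_le one_pos hp
  set pe : ENNReal := ENNReal.ofReal p with hpe
  have hpe1 : 1 ≤ pe := by
    rw [hpe, ← ENNReal.ofReal_one]
    exact ENNReal.ofReal_le_ofReal hp
  -- memℒp of the positive parts
  have hmemP : ∀ {f : Ω → ℝ}, MemLp f pe μ → ∀ t : ℝ,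
      MemLp (fun ω => max (t - f ω) 0) pe μ := by
    intro f hf t
    have h1 : MemLp (fun ω => t - f ω) pe μ := (memLp_const t).sub hf
    exact h1.of_le (h1.aestronglyMeasurable.sup aestronglyMeasurable_const)
      (Filter.Eventually.of_forall fun ω => by
        simp only [Real.norm_eq_abs]
        rcases le_total (t - f ω) 0 with h' | h'
        · simp [max_eq_right h', abs_nonneg]
        · simp [max_eq_left h'])
  intro x hx y hy a b ha hb hab
  intro t
  set fx : Ω → ℝ := fun ω => max (t - h x ω) 0 with hfx
  set fy : Ω → ℝ := fun ω => max (t - h y ω) 0 with hfy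
  set fz : Ω → ℝ := fun ω => max (t - h (a • x + b • y) ω) 0 with hfz
  set f₀ : Ω → ℝ := fun ω => max (t - ξ₀ ω) 0 with hf₀
  have memx : MemLp fx pe μ := hmemP (hmem x) t
  have memy : MemLp fy pe μ := hmemP (hmem y) t
  have mem₀ : MemLp f₀ pe μ := hmemP hξ₀ t
  have memz : MemLp fz pe μ := hmemP (hmem (a • x + b • y)) t
  -- pointwise bound
  have hpt : ∀ᵐ ω ∂μ, fz ω ≤ a * fx ω + b * fy ω := by
    filter_upwards [hconc] with ω hc
    have hcc : a * h x ω + b * h y ω ≤ h (a • x + b • y) ω := by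
      have := hc.2 (Set.mem_univ x) (Set.mem_univ y) ha hb hab
      simpa using this
    have h1 : t - h (a • x + b • y) ω ≤ a * (t - h x ω) + b * (t - h y ω) := by
      have heq : a * (t - h x ω) + b * (t - h y ω)
          = (a + b) * t - (a * h x ω + b * h y ω) := by ring
      rw [heq, hab, one_mul]
      linarith
    have h2 : a * (t - h x ω) + b * (t - h y ω) ≤ a * fx ω + b * fy ω := by
      have := le_max_left (t - h x ω) (0 : ℝ)
      have := le_max_left (t - h y ω) (0 : ℝ)
      have hx0 : (0:ℝ) ≤ fx ω := le_max_right _ _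
      have hy0 : (0:ℝ) ≤ fy ω := le_max_right _ _
      gcongr
    have h3 : (0:ℝ) ≤ a * fx ω + b * fy ω := by positivity
    exact max_le (h1.trans h2) h3
  -- eLpNorm comparison
  have E1 : eLpNorm fz pe μ ≤ eLpNorm (a • fx + b • fy) pe μ := by
    apply eLpNorm_mono_ae
    filter_upwards [hpt] with ω hω
    simp only [Pi.add_apply, Pi.smul_apply, smul_eq_mul, Real.norm_eq_abs]
    have h0 : (0:ℝ) ≤ fz ω := le_max_right _ _
    have : (0:ℝ) ≤ a * fx ω + b * fy ω := by
      have hx0 : (0:ℝ) ≤ fx ω := le_max_right _ _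
      have hy0 : (0:ℝ) ≤ fy ω := le_max_right _ _
      positivity
    rw [abs_of_nonneg h0, abs_of_nonneg this]
    exact hω
  have E2 : eLpNorm (a • fx + b • fy) pe μ ≤
      ENNReal.ofReal a * eLpNorm fx pe μ + ENNReal.ofReal b * eLpNorm fy pe μ := by
    refine le_trans (eLpNorm_add_le (memx.aestronglyMeasurable.const_smul a)
      (memy.aestronglyMeasurable.const_smul b) hpe1) ?_
    rw [eLpNorm_const_smul, eLpNorm_const_smul]
    gcongr
    · simp [Real.nnnorm_of_nonneg ha, ENNReal.ofReal, Real.toNNReal_of_nonneg ha]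
    · simp [Real.nnnorm_of_nonneg hb, ENNReal.ofReal, Real.toNNReal_of_nonneg hb]
  -- convert hypotheses to eLpNorm
  have hfin₀ : eLpNorm f₀ pe μ ≠ ⊤ := mem₀.eLpNorm_ne_top
  have hxE : eLpNorm fx pe μ ≤ eLpNorm f₀ pe μ := by
    have := hx t
    rw [pnorm_eq_toReal_eLpNorm μ hp memx, pnorm_eq_toReal_eLpNorm μ hp mem₀] at this
    exact (ENNReal.toReal_le_toReal memx.eLpNorm_ne_top hfin₀).mp this
  have hyE : eLpNorm fy pe μ ≤ eLpNorm f₀ pe μ := by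
    have := hy t
    rw [pnorm_eq_toReal_eLpNorm μ hp memy, pnorm_eq_toReal_eLpNorm μ hp mem₀] at this
    exact (ENNReal.toReal_le_toReal memy.eLpNorm_ne_top hfin₀).mp this
  have E3 : eLpNorm fz pe μ ≤ eLpNorm f₀ pe μ := by
    calc eLpNorm fz pe μ ≤ ENNReal.ofReal a * eLpNorm fx pe μ
        + ENNReal.ofReal b * eLpNorm fy pe μ := E1.trans E2
      _ ≤ ENNReal.ofReal a * eLpNorm f₀ pe μ + ENNReal.ofReal b * eLpNorm f₀ pe μ := by
          gcongr
      _ = (ENNReal.ofReal a + ENNReal.ofReal b) * eLpNorm f₀ pe μ := by ring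
      _ = eLpNorm f₀ pe μ := by
          rw [← ENNReal.ofReal_add ha hb, hab, ENNReal.ofReal_one, one_mul]
  rw [pnorm_eq_toReal_eLpNorm μ hp memz, pnorm_eq_toReal_eLpNorm μ hp mem₀]
  exact ENNReal.toReal_mono hfin₀ E3
end

section
/- Let (Ω, F, P) be a probability space, p ∈ [1, ∞), and β ∈ (0, 1). The higher-order risk measure R_β : L^p(P) → ℝ satisfies the axioms of a coherent risk measure: (1) R_β(λY) = λ R_β(Y) for all λ ≥ 0 and Y ∈ L^p; (2) R_β(Y + c) = c + R_β(Y) for all c ∈ ℝ and Y ∈ L^p; (3) R_β(X + Y) ≤ R_β(X) + R_β(Y) for all X, Y ∈ L^p; (4) if X ≤ Y almost surely, then R_β(X) ≤ R_β(Y). -/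
open MeasureTheory

section Aux

variable {Ω : Type*} [MeasurableSpace Ω] (μ : Measure Ω) {p : ℝ}

lemma pnorm_nonneg_s13 (Z : Ω → ℝ) : 0 ≤ pnorm μ p Z :=
  Real.rpow_nonneg (integral_nonneg fun ω => Real.rpow_nonneg (abs_nonneg _) _) _

lemma pnorm_eq_toReal (hp : 1 ≤ p) {g : Ω → ℝ} (hg : MemLp g (ENNReal.ofReal p) μ) :
    pnorm μ p g = (eLpNorm g (ENNReal.ofReal p) μ).toReal := by
  have hp0 : 0 < p := lt_of_lt_of_le one_pos hp
  have htp : (ENNReal.ofReal p).toReal = p := ENNReal.toReal_ofReal hp0.le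
  have hnn : 0 ≤ ∫ a, ‖g a‖ ^ (ENNReal.ofReal p).toReal ∂μ :=
    integral_nonneg fun a => Real.rpow_nonneg (norm_nonneg _) _
  rw [hg.eLpNorm_eq_integral_rpow_norm (by simp [hp0]) ENNReal.ofReal_ne_top,
    ENNReal.toReal_ofReal (Real.rpow_nonneg hnn _), pnorm]
  simp only [htp, Real.norm_eq_abs, one_div]

lemma pnorm_const_mul (hp : 0 < p) {l : ℝ} (hl : 0 ≤ l) (Z : Ω → ℝ) :
    pnorm μ p (fun ω => l * Z ω) = l * pnorm μ p Z := by
  unfold pnorm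
  have h1 : ∀ ω, |l * Z ω| ^ p = l ^ p * |Z ω| ^ p := by
    intro ω
    rw [abs_mul, abs_of_nonneg hl, Real.mul_rpow hl (abs_nonneg _)]
  simp_rw [h1, integral_const_mul]
  rw [Real.mul_rpow (Real.rpow_nonneg hl _)
    (integral_nonneg fun ω => Real.rpow_nonneg (abs_nonneg _) _),
    ← Real.rpow_mul hl, mul_one_div_cancel hp.ne', Real.rpow_one]

lemma pnorm_mono (hp : 0 < p) {Z W : Ω → ℝ} (h0 : ∀ ω, 0 ≤ Z ω)
    (hle : ∀ᵐ ω ∂μ, Z ω ≤ W ω)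
    (hW : Integrable (fun ω => |W ω| ^ p) μ) :
    pnorm μ p Z ≤ pnorm μ p W := by
  unfold pnorm
  apply Real.rpow_le_rpow (integral_nonneg fun ω => Real.rpow_nonneg (abs_nonneg _) _)
  · apply integral_mono_of_nonneg
      (Filter.Eventually.of_forall fun ω => Real.rpow_nonneg (abs_nonneg _) _) hW
    refine hle.mono fun ω hω => ?_
    have hZW : |Z ω| ≤ |W ω| := by
      rw [abs_of_nonneg (h0 ω), abs_of_nonneg ((h0 ω).trans hω)]
      exact hω
    exact Real.rpow_le_rpow (abs_nonneg _) hZW hp.le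
  · positivity

lemma integrable_abs_rpow (hp : 1 ≤ p) {g : Ω → ℝ} (hg : MemLp g (ENNReal.ofReal p) μ) :
    Integrable (fun ω => |g ω| ^ p) μ := by
  have hp0 : 0 < p := lt_of_lt_of_le one_pos hp
  have := hg.integrable_norm_rpow (by simp [hp0]) ENNReal.ofReal_ne_top
  simpa [ENNReal.toReal_ofReal hp0.le, Real.norm_eq_abs] using this

variable [IsProbabilityMeasure μ]

lemma pnorm_jensen (hp : 1 ≤ p) {g : Ω → ℝ} (hg : MemLp g (ENNReal.ofReal p) μ)
    (hg0 : ∀ ω, 0 ≤ g ω) : ∫ ω, g ω ∂μ ≤ pnorm μ p g := by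
  have hq1 : (1 : ENNReal) ≤ ENNReal.ofReal p := by
    rw [← ENNReal.ofReal_one]; exact ENNReal.ofReal_le_ofReal hp
  have h1 : MemLp g 1 μ := hg.mono_exponent hq1
  have e1 : (eLpNorm g 1 μ).toReal = ∫ ω, g ω ∂μ := by
    rw [h1.eLpNorm_eq_integral_rpow_norm one_ne_zero ENNReal.one_ne_top]
    simp only [ENNReal.toReal_one, Real.rpow_one, inv_one]
    rw [ENNReal.toReal_ofReal (integral_nonneg fun ω => norm_nonneg _)]
    exact integral_congr_ae (Filter.Eventually.of_forall fun ω => by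
      simp [Real.norm_eq_abs, abs_of_nonneg (hg0 ω)])
  rw [pnorm_eq_toReal μ hp hg, ← e1]
  exact ENNReal.toReal_mono hg.2.ne (eLpNorm_le_eLpNorm_of_exponent_le hq1 hg.1)

lemma pnorm_add_le (hp : 1 ≤ p) {f g : Ω → ℝ} (hf : MemLp f (ENNReal.ofReal p) μ)
    (hg : MemLp g (ENNReal.ofReal p) μ) :
    pnorm μ p (fun ω => f ω + g ω) ≤ pnorm μ p f + pnorm μ p g := by
  have hq1 : (1 : ENNReal) ≤ ENNReal.ofReal p := by
    rw [← ENNReal.ofReal_one]; exact ENNReal.ofReal_le_ofReal hp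
  have hfg : MemLp (fun ω => f ω + g ω) (ENNReal.ofReal p) μ := hf.add hg
  rw [pnorm_eq_toReal μ hp hfg, pnorm_eq_toReal μ hp hf, pnorm_eq_toReal μ hp hg,
    ← ENNReal.toReal_add hf.2.ne hg.2.ne]
  exact ENNReal.toReal_mono (ENNReal.add_ne_top.mpr ⟨hf.2.ne, hg.2.ne⟩)
    (eLpNorm_add_le hf.1 hg.1 hq1)

lemma memℒp_pos_part_sub (hp : 1 ≤ p) {Y : Ω → ℝ} (hY : MemLp Y (ENNReal.ofReal p) μ)
    (t : ℝ) : MemLp (fun ω => max (Y ω - t) 0) (ENNReal.ofReal p) μ := by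
  have := (hY.sub (memLp_const (μ := μ) t)).pos_part
  simpa [Pi.sub_apply] using this

lemma riskR_lb (hp : 1 ≤ p) {C : ℝ} (hC : 1 ≤ C) {Y : Ω → ℝ}
    (hY : MemLp Y (ENNReal.ofReal p) μ) (t : ℝ) :
    ∫ ω, Y ω ∂μ ≤ t + C * pnorm μ p (fun ω => max (Y ω - t) 0) := by
  have hq1 : (1 : ENNReal) ≤ ENNReal.ofReal p := by
    rw [← ENNReal.ofReal_one]; exact ENNReal.ofReal_le_ofReal hp
  have hint : Integrable Y μ := hY.integrable hq1
  have hg : MemLp (fun ω => max (Y ω - t) 0) (ENNReal.ofReal p) μ :=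
    memℒp_pos_part_sub μ hp hY t
  have hgi : Integrable (fun ω => max (Y ω - t) 0) μ := hg.integrable hq1
  have h2 : (∫ ω, Y ω ∂μ) - t ≤ ∫ ω, max (Y ω - t) 0 ∂μ := by
    have := integral_mono (hint.sub (integrable_const t)) hgi
      (fun ω => le_max_left (Y ω - t) 0)
    simp only [Pi.sub_apply] at this
    rwa [integral_sub hint (integrable_const t), integral_const, probReal_univ,
      one_smul] at this
  have h3 : (∫ ω, max (Y ω - t) 0 ∂μ) ≤ pnorm μ p (fun ω => max (Y ω - t) 0) :=
    pnorm_jensen μ hp hg fun ω => le_max_right _ _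
  have h4 : pnorm μ p (fun ω => max (Y ω - t) 0)
      ≤ C * pnorm μ p (fun ω => max (Y ω - t) 0) :=
    le_mul_of_one_le_left (pnorm_nonneg_s13 μ _) hC
  linarith

end Aux

lemma iInf_comp_surj {g : ℝ → ℝ} (hg : Function.Surjective g) (f : ℝ → ℝ) :
    ⨅ t, f (g t) = ⨅ t, f t := by
  rw [iInf, iInf]
  congr 1
  exact hg.range_comp f

lemma const_add_ciInf {h : ℝ → ℝ} (hb : BddBelow (Set.range h)) (c : ℝ) :
    ⨅ t, (c + h t) = c + ⨅ t, h t := by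
  have hb' : BddBelow (Set.range fun t => c + h t) := by
    obtain ⟨b, hbb⟩ := hb
    exact ⟨c + b, by rintro _ ⟨t, rfl⟩; exact add_le_add_right (hbb ⟨t, rfl⟩) c⟩
  apply le_antisymm
  · have h1 : ∀ t, (⨅ s, (c + h s)) - c ≤ h t := fun t => by
      have := ciInf_le hb' t; linarith
    have := le_ciInf h1
    linarith
  · exact le_ciInf fun t => add_le_add_right (ciInf_le hb t) c

/-- The higher-order risk measure `R_β` satisfies the axioms of a coherent risk measure:
positive homogeneity, cash translativity, subadditivity, and monotonicity. -/
theorem stmt13 {Ω : Type*} [MeasurableSpace Ω] (μ : Measure Ω) [IsProbabilityMeasure μ]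
    (p : ℝ) (hp : 1 ≤ p) (β : ℝ) (hβ : β ∈ Set.Ioo (0 : ℝ) 1) :
    (∀ Y : Ω → ℝ, MemLp Y (ENNReal.ofReal p) μ → ∀ lam : ℝ, 0 ≤ lam →
      riskR μ p β (fun ω => lam * Y ω) = lam * riskR μ p β Y) ∧
    (∀ Y : Ω → ℝ, MemLp Y (ENNReal.ofReal p) μ → ∀ c : ℝ,
      riskR μ p β (fun ω => Y ω + c) = c + riskR μ p β Y) ∧
    (∀ X Y : Ω → ℝ, MemLp X (ENNReal.ofReal p) μ → MemLp Y (ENNReal.ofReal p) μ →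
      riskR μ p β (fun ω => X ω + Y ω) ≤ riskR μ p β X + riskR μ p β Y) ∧
    (∀ X Y : Ω → ℝ, MemLp X (ENNReal.ofReal p) μ → MemLp Y (ENNReal.ofReal p) μ →
      (∀ᵐ ω ∂μ, X ω ≤ Y ω) → riskR μ p β X ≤ riskR μ p β Y) := by
  have hp0 : 0 < p := lt_of_lt_of_le one_pos hp
  have h1β : 0 < 1 - β := by linarith [hβ.2]
  set C : ℝ := (1 - β)⁻¹ with hCdef
  have hC1 : 1 ≤ C := by
    rw [hCdef, le_inv_comm₀ one_pos h1β]
    simp; linarith [hβ.1]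
  have hC0 : 0 ≤ C := le_trans zero_le_one hC1
  -- bounded below
  have hbdd : ∀ Y : Ω → ℝ, MemLp Y (ENNReal.ofReal p) μ →
      BddBelow (Set.range fun t : ℝ => t + C * pnorm μ p (fun ω => max (Y ω - t) 0)) := by
    intro Y hY
    exact ⟨∫ ω, Y ω ∂μ, by rintro _ ⟨t, rfl⟩; exact riskR_lb μ hp hC1 hY t⟩
  -- riskR of zero
  have hzero : riskR μ p β (fun _ : Ω => (0 : ℝ)) = 0 := by
    unfold riskR pnorm
    have hcalc : ∀ t : ℝ,
        (∫ ω : Ω, |max ((0:ℝ) - t) 0| ^ p ∂μ) ^ (1 / p) = max (-t) 0 := by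
      intro t
      rw [integral_const, probReal_univ, one_smul,
        abs_of_nonneg (le_max_right _ _),
        ← Real.rpow_mul (le_max_right _ _), mul_one_div_cancel hp0.ne', Real.rpow_one]
      congr 1
      ring
    simp only [hcalc]
    have hge : ∀ t : ℝ, (0:ℝ) ≤ t + (1 - β)⁻¹ * max (-t) 0 := by
      intro t
      rcases le_or_gt 0 t with h | h
      · rw [max_eq_right (by linarith)]; linarith
      · rw [max_eq_left (by linarith)]
        have : 1 * (-t) ≤ (1 - β)⁻¹ * (-t) :=
          mul_le_mul_of_nonneg_right hC1 (by linarith)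
        linarith
    apply le_antisymm
    · have hb : BddBelow (Set.range fun t : ℝ => t + (1 - β)⁻¹ * max (-t) 0) :=
        ⟨0, by rintro _ ⟨t, rfl⟩; exact hge t⟩
      refine ciInf_le_of_le hb 0 ?_
      simp
    · exact le_ciInf hge
  refine ⟨?_, ?_, ?_, ?_⟩
  · -- positive homogeneity
    intro Y hY lam hlam
    rcases eq_or_lt_of_le hlam with h0 | h0
    · simp only [← h0, zero_mul]
      rw [hzero]
    · unfold riskR
      have hsurj : Function.Surjective (fun t : ℝ => lam * t) := by
        intro y; exact ⟨y / lam, by field_simp⟩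
      rw [← iInf_comp_surj hsurj
        (fun t => t + (1 - β)⁻¹ * pnorm μ p (fun ω => max (lam * Y ω - t) 0))]
      rw [Real.mul_iInf_of_nonneg hlam]
      apply iInf_congr
      intro t
      have harg : (fun ω => max (lam * Y ω - lam * t) 0)
          = fun ω => lam * max (Y ω - t) 0 := by
        funext ω
        rw [mul_max_of_nonneg _ _ hlam, mul_zero, mul_sub]
      simp only [harg, pnorm_const_mul μ hp0 hlam]
      ring
  · -- translation
    intro Y hY c
    unfold riskR
    have hsurj : Function.Surjective (fun t : ℝ => t + c) := fun y => ⟨y - c, by ring⟩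
    rw [← iInf_comp_surj hsurj
      (fun t => t + (1 - β)⁻¹ * pnorm μ p (fun ω => max (Y ω + c - t) 0))]
    have heq : ∀ t : ℝ, (t + c) + (1 - β)⁻¹ * pnorm μ p (fun ω => max (Y ω + c - (t + c)) 0)
        = c + (t + (1 - β)⁻¹ * pnorm μ p (fun ω => max (Y ω - t) 0)) := by
      intro t
      have : (fun ω => max (Y ω + c - (t + c)) 0) = fun ω => max (Y ω - t) 0 := by
        funext ω; congr 1; ring
      rw [this]; ring
    simp only [heq]
    exact const_add_ciInf (hbdd Y hY) c
  · -- subadditivity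
    intro X Y hX hY
    refine le_ciInf_add_ciInf fun s t => ?_
    have hXs := memℒp_pos_part_sub μ hp hX s
    have hYt := memℒp_pos_part_sub μ hp hY t
    have hsum : MemLp (fun ω => max (X ω - s) 0 + max (Y ω - t) 0) (ENNReal.ofReal p) μ :=
      hXs.add hYt
    have hmono : pnorm μ p (fun ω => max (X ω + Y ω - (s + t)) 0)
        ≤ pnorm μ p (fun ω => max (X ω - s) 0 + max (Y ω - t) 0) := by
      apply pnorm_mono μ hp0 (fun ω => le_max_right _ _)
      · refine Filter.Eventually.of_forall fun ω => ?_
        have h1 : X ω + Y ω - (s + t) ≤ max (X ω - s) 0 + max (Y ω - t) 0 := by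
          have := le_max_left (X ω - s) 0
          have := le_max_left (Y ω - t) 0
          linarith
        have h2 : (0:ℝ) ≤ max (X ω - s) 0 + max (Y ω - t) 0 := by positivity
        exact max_le h1 h2
      · exact integrable_abs_rpow μ hp hsum
    have htri : pnorm μ p (fun ω => max (X ω - s) 0 + max (Y ω - t) 0)
        ≤ pnorm μ p (fun ω => max (X ω - s) 0) + pnorm μ p (fun ω => max (Y ω - t) 0) :=
      pnorm_add_le μ hp hXs hYt
    have hCmul : C * pnorm μ p (fun ω => max (X ω + Y ω - (s + t)) 0)
        ≤ C * (pnorm μ p (fun ω => max (X ω - s) 0) + pnorm μ p (fun ω => max (Y ω - t) 0)) :=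
      mul_le_mul_of_nonneg_left (hmono.trans htri) hC0
    calc riskR μ p β (fun ω => X ω + Y ω)
        ≤ (s + t) + (1 - β)⁻¹ * pnorm μ p (fun ω => max (X ω + Y ω - (s + t)) 0) :=
          ciInf_le (hbdd _ (hX.add hY)) (s + t)
      _ ≤ (s + (1 - β)⁻¹ * pnorm μ p (fun ω => max (X ω - s) 0))
          + (t + (1 - β)⁻¹ * pnorm μ p (fun ω => max (Y ω - t) 0)) := by
          rw [← hCdef] at *
          nlinarith [hCmul]
  · -- monotonicity
    intro X Y hX hY hXY
    apply ciInf_mono (hbdd X hX)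
    intro t
    have hmono : pnorm μ p (fun ω => max (X ω - t) 0)
        ≤ pnorm μ p (fun ω => max (Y ω - t) 0) := by
      apply pnorm_mono μ hp0 (fun ω => le_max_right _ _)
      · exact hXY.mono fun ω hω => max_le_max (by linarith) le_rfl
      · exact integrable_abs_rpow μ hp (memℒp_pos_part_sub μ hp hY t)
    nlinarith [hmono, hC0, hCdef]
end

section
/- Let (Ω, F, P) be a probability space, let p > 1 be a real number, and let X be a real-valued random variable with E[((−X)₊)^p] < ∞. Then the function G(t) := E[((t − X)₊)^p] is differentiable on ℝ with derivative G′(t) = p · E[((t − X)₊)^{p−1}] for every t ∈ ℝ. -/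
open MeasureTheory Real Filter Asymptotics

lemma pospart_rpow_hasDerivAt {p : ℝ} (hp : 1 < p) (y : ℝ) :
    HasDerivAt (fun s : ℝ => max s 0 ^ p) (p * max y 0 ^ (p - 1)) y := by
  have hp0 : p ≠ 0 := by linarith
  have hp1 : p - 1 ≠ 0 := by linarith
  rcases lt_trichotomy y 0 with h | h | h
  · have hev : (fun s : ℝ => max s 0 ^ p) =ᶠ[nhds y] fun _ => (0:ℝ) ^ p := by
      filter_upwards [eventually_lt_nhds h] with s hs
      rw [max_eq_right hs.le]
    have h0 : HasDerivAt (fun _ : ℝ => (0:ℝ) ^ p) 0 y := hasDerivAt_const _ _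
    have := h0.congr_of_eventuallyEq hev
    simpa [max_eq_right h.le, Real.zero_rpow hp1] using this
  · subst h
    rw [hasDerivAt_iff_isLittleO]
    simp only [max_self, Real.zero_rpow hp0, Real.zero_rpow hp1, mul_zero, smul_zero,
      sub_zero]
    have h1 : Filter.Tendsto (fun s : ℝ => |s| ^ (p - 1)) (nhds 0) (nhds 0) := by
      have := (continuous_abs.tendsto (0:ℝ)).rpow_const (Or.inr (by linarith : (0:ℝ) ≤ p - 1))
      simpa [Real.zero_rpow hp1] using this
    have h2 : (fun s : ℝ => |s| ^ (p - 1)) =o[nhds 0] (fun _ => (1:ℝ)) :=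
      Asymptotics.isLittleO_one_iff ℝ |>.mpr h1
    have h3 : (fun s : ℝ => |s| ^ (p - 1) * s) =o[nhds 0] (fun s : ℝ => s) := by
      simpa using h2.mul_isBigO (Asymptotics.isBigO_refl (fun s : ℝ => s) (nhds 0))
    refine (Asymptotics.isBigO_of_le _ fun s => ?_).trans_isLittleO h3
    have hmn : (0:ℝ) ≤ max s 0 := le_max_right _ _
    have hb : max s 0 ^ p ≤ |s| ^ p :=
      Real.rpow_le_rpow hmn (max_le (le_abs_self s) (abs_nonneg s)) (by linarith)
    rw [Real.norm_eq_abs, abs_of_nonneg (Real.rpow_nonneg hmn p)]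
    rcases eq_or_ne s 0 with rfl | hs
    · simp [Real.zero_rpow hp0]
    · have : |s| ^ (p - 1) * |s| = |s| ^ p := by
        rw [← Real.rpow_add_one (abs_ne_zero.mpr hs) (p - 1)]
        ring_nf
      calc max s 0 ^ p ≤ |s| ^ p := hb
        _ = |s| ^ (p - 1) * |s| := this.symm
        _ = ‖|s| ^ (p - 1) * s‖ := by
            rw [Real.norm_eq_abs, abs_mul, abs_of_nonneg (Real.rpow_nonneg (abs_nonneg s) _)]
  · have hev : (fun s : ℝ => max s 0 ^ p) =ᶠ[nhds y] fun s => s ^ p := by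
      filter_upwards [eventually_gt_nhds h] with s hs
      rw [max_eq_left hs.le]
    have h0 : HasDerivAt (fun s : ℝ => s ^ p) (p * y ^ (p - 1)) y :=
      Real.hasDerivAt_rpow_const (Or.inl h.ne')
    have := h0.congr_of_eventuallyEq hev
    simpa [max_eq_left h.le] using this

lemma pospart_rpow_shift_hasDerivAt {p : ℝ} (hp : 1 < p) (x t : ℝ) :
    HasDerivAt (fun s : ℝ => max (s - x) 0 ^ p) (p * max (t - x) 0 ^ (p - 1)) t := by
  have h := (pospart_rpow_hasDerivAt hp (t - x)).comp t ((hasDerivAt_id t).sub_const x)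
  simpa [Function.comp_def] using h

lemma integrable_pospart_rpow {Ω : Type*} [MeasurableSpace Ω] (μ : Measure Ω)
    [IsProbabilityMeasure μ] {p : ℝ} (hp : 0 < p) {X : Ω → ℝ} (hXm : Measurable X)
    (hX : Integrable (fun ω => max (-X ω) 0 ^ p) μ) (c : ℝ) :
    Integrable (fun ω => max (c - X ω) 0 ^ p) μ := by
  have hmeas : Measurable fun ω => max (c - X ω) 0 ^ p :=
    (Real.continuous_rpow_const (by linarith)).measurable.comp ((measurable_const.sub hXm).max measurable_const)
  refine Integrable.mono ((integrable_const ((2:ℝ) ^ p * |c| ^ p)).add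
      (hX.const_mul ((2:ℝ) ^ p))) hmeas.aestronglyMeasurable ?_
  filter_upwards with ω
  set a := max (c - X ω) 0 with ha
  set b := max (-X ω) 0 with hb
  have ha0 : 0 ≤ a := le_max_right _ _
  have hb0 : 0 ≤ b := le_max_right _ _
  have hab : a ≤ |c| + b := by
    apply max_le _ (by positivity)
    have : c - X ω ≤ |c| + max (-X ω) 0 :=
      add_le_add (le_abs_self c) (le_max_left _ _)
    simpa using this
  have h2 : |c| + b ≤ 2 * max |c| b := by
    have := le_max_left |c| b
    have := le_max_right |c| b
    nlinarith [abs_nonneg c]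
  have key : a ^ p ≤ 2 ^ p * (|c| ^ p + b ^ p) := by
    calc a ^ p ≤ (2 * max |c| b) ^ p :=
          Real.rpow_le_rpow ha0 (hab.trans h2) hp.le
      _ = 2 ^ p * max |c| b ^ p := Real.mul_rpow (by norm_num) (le_max_of_le_left (abs_nonneg c))
      _ ≤ 2 ^ p * (|c| ^ p + b ^ p) := by
          gcongr
          rcases max_cases |c| b with ⟨h, _⟩ | ⟨h, _⟩ <;> rw [h]
          · nlinarith [Real.rpow_nonneg hb0 p]
          · nlinarith [Real.rpow_nonneg (abs_nonneg c) p]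
  have h1 : ‖a ^ p‖ = a ^ p := abs_of_nonneg (Real.rpow_nonneg ha0 p)
  rw [h1]
  refine key.trans ?_
  have : 2 ^ p * (|c| ^ p + b ^ p) = 2 ^ p * |c| ^ p + 2 ^ p * b ^ p := by ring
  rw [this]
  exact le_abs_self _

lemma integrable_pospart_rpow_sub_one {Ω : Type*} [MeasurableSpace Ω] (μ : Measure Ω)
    [IsProbabilityMeasure μ] {p : ℝ} (hp : 1 < p) {X : Ω → ℝ} (hXm : Measurable X)
    (hX : Integrable (fun ω => max (-X ω) 0 ^ p) μ) (c : ℝ) :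
    Integrable (fun ω => max (c - X ω) 0 ^ (p - 1)) μ := by
  have hmeas : Measurable fun ω => max (c - X ω) 0 ^ (p - 1) :=
    (Real.continuous_rpow_const (by linarith)).measurable.comp ((measurable_const.sub hXm).max measurable_const)
  refine Integrable.mono ((integrable_const (1:ℝ)).add
      (integrable_pospart_rpow μ (by linarith) hXm hX c)) hmeas.aestronglyMeasurable ?_
  filter_upwards with ω
  set a := max (c - X ω) 0 with ha
  have ha0 : 0 ≤ a := le_max_right _ _
  have h1 : ‖a ^ (p - 1)‖ = a ^ (p - 1) := abs_of_nonneg (Real.rpow_nonneg ha0 _)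
  rw [h1]
  have key : a ^ (p - 1) ≤ 1 + a ^ p := by
    rcases le_or_gt a 1 with h | h
    · have := Real.rpow_le_one ha0 h (by linarith : (0:ℝ) ≤ p - 1)
      nlinarith [Real.rpow_nonneg ha0 p]
    · have := Real.rpow_le_rpow_of_exponent_le h.le (by linarith : p - 1 ≤ p)
      linarith
  refine key.trans ?_
  have : (0:ℝ) ≤ 1 + a ^ p := by positivity
  exact le_abs_self _

/-- For real `p > 1` and `X` with `E[((−X)₊)^p] < ∞`, the function
`G(t) = E[((t − X)₊)^p]` is differentiable with `G′(t) = p · E[((t − X)₊)^{p−1}]`. -/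
theorem stmt14 {Ω : Type*} [MeasurableSpace Ω] (μ : Measure Ω) [IsProbabilityMeasure μ]
    (p : ℝ) (hp : 1 < p) (X : Ω → ℝ) (hXm : Measurable X)
    (hX : Integrable (fun ω => max (-X ω) 0 ^ p) μ) :
    ∀ t : ℝ, HasDerivAt (fun s : ℝ => ∫ ω, max (s - X ω) 0 ^ p ∂μ)
      (p * ∫ ω, max (t - X ω) 0 ^ (p - 1) ∂μ) t := by
  intro t
  have hp0 : 0 < p := by linarith
  have key := hasDerivAt_integral_of_dominated_loc_of_deriv_le
    (F := fun s ω => max (s - X ω) 0 ^ p)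
    (F' := fun s ω => p * max (s - X ω) 0 ^ (p - 1))
    (bound := fun ω => p * max (t + 1 - X ω) 0 ^ (p - 1))
    (x₀ := t) (μ := μ) (Metric.ball_mem_nhds t one_pos)
    (Eventually.of_forall fun s =>
      ((Real.continuous_rpow_const (by linarith)).measurable.comp ((measurable_const.sub hXm).max measurable_const)).aestronglyMeasurable)
    (integrable_pospart_rpow μ hp0 hXm hX t)
    ((measurable_const.mul ((Real.continuous_rpow_const (by linarith : (0:ℝ) ≤ p - 1)).measurable.comp
      ((measurable_const.sub hXm).max measurable_const))).aestronglyMeasurable)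
    ?_ ((integrable_pospart_rpow_sub_one μ hp hXm hX (t + 1)).const_mul p) ?_
  · have := key.2
    rwa [MeasureTheory.integral_const_mul] at this
  · filter_upwards with ω s hs
    have hs1 : s ≤ t + 1 := by
      have := abs_lt.mp (by simpa [Real.dist_eq] using Metric.mem_ball.mp hs)
      linarith [this.2]
    have h1 : max (s - X ω) 0 ≤ max (t + 1 - X ω) 0 :=
      max_le_max (by linarith) le_rfl
    have h2 : max (s - X ω) 0 ^ (p - 1) ≤ max (t + 1 - X ω) 0 ^ (p - 1) :=
      Real.rpow_le_rpow (le_max_right _ _) h1 (by linarith)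
    rw [Real.norm_eq_abs, abs_of_nonneg (by positivity)]
    nlinarith
  · filter_upwards with ω s _
    exact pospart_rpow_shift_hasDerivAt hp (X ω) s
end

section
/- Let (Ω, F, P) be a probability space, let p > 1 be a real number, let t ∈ ℝ, and let ξ : Ω → ℝ^d be a random vector with E[|ξ|^p] < ∞. Then the function g : ℝ^d → ℝ defined by g(x) := E[((t − ⟨x, ξ⟩)₊)^p] is differentiable on ℝ^d with gradient ∇g(x) = −p · E[((t − ⟨x, ξ⟩)₊)^{p−1} · ξ] for every x ∈ ℝ^d. -/
set_option maxHeartbeats 1000000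
set_option synthInstance.maxHeartbeats 400000
open MeasureTheory

lemma maxpow_hasDerivAt (p : ℝ) (hp : 1 < p) (s : ℝ) :
    HasDerivAt (fun s : ℝ => max s 0 ^ p) (p * max s 0 ^ (p - 1)) s := by
  rcases lt_trichotomy s 0 with h | h | h
  · have hev : (fun s : ℝ => max s 0 ^ p) =ᶠ[nhds s] fun _ => (0:ℝ) ^ p := by
      filter_upwards [eventually_lt_nhds h] with u hu
      rw [max_eq_right hu.le]
    rw [max_eq_right h.le, Real.zero_rpow (by linarith), mul_zero]
    exact (hasDerivAt_const s ((0:ℝ) ^ p)).congr_of_eventuallyEq hev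
  · subst h
    rw [max_self, Real.zero_rpow (by linarith), mul_zero]
    rw [hasDerivAt_iff_tendsto_slope]
    apply squeeze_zero_norm (a := fun u : ℝ => |u| ^ (p - 1))
    · intro u
      simp only [slope_def_field, max_eq_right le_rfl,
        Real.zero_rpow (by linarith : p ≠ 0), sub_zero]
      rcases le_or_gt u 0 with hu | hu
      · simp [max_eq_right hu, Real.zero_rpow (by linarith : p ≠ 0),
          Real.rpow_nonneg (abs_nonneg u)]
      · rw [max_eq_left hu.le, Real.norm_eq_abs, abs_of_nonneg (by positivity),
          abs_of_pos hu, Real.rpow_sub hu, Real.rpow_one]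
    · have h1 : ContinuousAt (fun u : ℝ => |u| ^ (p - 1)) 0 :=
        (Real.continuousAt_rpow_const _ _ (Or.inr (by linarith))).comp continuous_abs.continuousAt
      have := h1.tendsto.mono_left (nhdsWithin_le_nhds (s := {(0:ℝ)}ᶜ))
      simpa [Real.zero_rpow (by linarith : p - 1 ≠ 0)] using this
  · have hev : (fun s : ℝ => max s 0 ^ p) =ᶠ[nhds s] fun u => u ^ p := by
      filter_upwards [eventually_gt_nhds h] with u hu
      rw [max_eq_left hu.le]
    rw [max_eq_left h.le]
    exact (Real.hasDerivAt_rpow_const (Or.inr hp.le)).congr_of_eventuallyEq hev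

/-- For real `p > 1`, `t ∈ ℝ` and a random vector `ξ` with `E[|ξ|^p] < ∞`, the function
`g(x) = E[((t − ⟨x, ξ⟩)₊)^p]` on `ℝ^d` is differentiable with gradient
`∇g(x) = −p · E[((t − ⟨x, ξ⟩)₊)^{p−1} · ξ]`. -/
theorem stmt15 {Ω : Type*} [MeasurableSpace Ω] (μ : Measure Ω) [IsProbabilityMeasure μ]
    (p : ℝ) (hp : 1 < p) (t : ℝ) (d : ℕ)
    (ξ : Ω → EuclideanSpace ℝ (Fin d)) (hξm : AEStronglyMeasurable ξ μ)
    (hξ : Integrable (fun ω => ‖ξ ω‖ ^ p) μ) :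
    ∀ x : EuclideanSpace ℝ (Fin d),
      HasGradientAt (fun y : EuclideanSpace ℝ (Fin d) =>
          ∫ ω, max (t - (inner ℝ y (ξ ω) : ℝ)) 0 ^ p ∂μ)
        ((-p) • ∫ ω, (max (t - (inner ℝ x (ξ ω) : ℝ)) 0 ^ (p - 1)) • ξ ω ∂μ) x := by
  intro x₀
  rw [hasGradientAt_iff_hasFDerivAt]
  have hp0 : (0:ℝ) < p := by linarith
  have hp1 : (0:ℝ) ≤ p - 1 := by linarith
  -- master integrability lemma
  have hmaster : ∀ a b q r : ℝ, 0 ≤ a → 0 ≤ b → 0 ≤ q → 0 ≤ r → q + r ≤ p →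
      Integrable (fun ω => (a + b * ‖ξ ω‖) ^ q * ‖ξ ω‖ ^ r) μ := by
    intro a b q r ha hb hq hr hqr
    have h1 : AEStronglyMeasurable (fun ω => (a + b * ‖ξ ω‖) ^ q) μ :=
      ((Real.continuous_rpow_const hq).comp
        (continuous_const.add (continuous_const.mul continuous_id))).comp_aestronglyMeasurable
        hξm.norm
    have h2 : AEStronglyMeasurable (fun ω => ‖ξ ω‖ ^ r) μ :=
      (Real.continuous_rpow_const hr).comp_aestronglyMeasurable hξm.norm
    refine Integrable.mono (g := fun ω => (a + b) ^ q * (1 + ‖ξ ω‖ ^ p))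
      (((integrable_const 1).add hξ).const_mul _) (h1.mul h2) ?_
    filter_upwards with ω
    have hn : (0:ℝ) ≤ ‖ξ ω‖ := norm_nonneg _
    set n := ‖ξ ω‖ with hndef
    set m := max 1 n with hmdef
    have hm1 : (1:ℝ) ≤ m := le_max_left _ _
    have hm0 : (0:ℝ) < m := lt_of_lt_of_le one_pos hm1
    have key : (a + b * n) ^ q * n ^ r ≤ (a + b) ^ q * m ^ p := by
      calc (a + b * n) ^ q * n ^ r ≤ ((a + b) * m) ^ q * m ^ r := by
            apply mul_le_mul
            · apply Real.rpow_le_rpow (by positivity) _ hq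
              have h3 : b * n ≤ b * m := by
                apply mul_le_mul_of_nonneg_left (le_max_right _ _) hb
              nlinarith [mul_le_mul_of_nonneg_left hm1 ha]
            · exact Real.rpow_le_rpow hn (le_max_right _ _) hr
            · positivity
            · positivity
        _ = (a + b) ^ q * (m ^ q * m ^ r) := by
            rw [Real.mul_rpow (by positivity) hm0.le]; ring
        _ = (a + b) ^ q * m ^ (q + r) := by rw [← Real.rpow_add hm0]
        _ ≤ (a + b) ^ q * m ^ p := by
            apply mul_le_mul_of_nonneg_left
              (Real.rpow_le_rpow_of_exponent_le hm1 hqr) (by positivity)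
    have key2 : m ^ p ≤ 1 + n ^ p := by
      rcases le_total n 1 with h | h
      · rw [hmdef, max_eq_left h, Real.one_rpow]
        have : (0:ℝ) ≤ n ^ p := Real.rpow_nonneg hn p
        linarith
      · rw [hmdef, max_eq_right h]
        linarith
    have hineq : (a + b * n) ^ q * n ^ r ≤ (a + b) ^ q * (1 + n ^ p) := by
      calc (a + b * n) ^ q * n ^ r ≤ (a + b) ^ q * m ^ p := key
        _ ≤ (a + b) ^ q * (1 + n ^ p) :=
            mul_le_mul_of_nonneg_left key2 (by positivity)
    have h5 : (0:ℝ) ≤ (a + b * n) ^ q * n ^ r := by positivity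
    have h6 : (0:ℝ) ≤ (a + b) ^ q * (1 + n ^ p) := by positivity
    rw [Real.norm_eq_abs, Real.norm_eq_abs, abs_of_nonneg h5, abs_of_nonneg h6]
    exact hineq
  -- notation
  set c : EuclideanSpace ℝ (Fin d) → Ω → ℝ := fun x ω => max (t - (inner ℝ x (ξ ω) : ℝ)) 0 with hcdef
  have hc_nonneg : ∀ x ω, 0 ≤ c x ω := fun x ω => le_max_right _ _
  have hc_le : ∀ (x : EuclideanSpace ℝ (Fin d)) ω, c x ω ≤ |t| + ‖x‖ * ‖ξ ω‖ := by
    intro x ω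
    apply max_le _ (by positivity)
    have h1 : |(inner ℝ x (ξ ω) : ℝ)| ≤ ‖x‖ * ‖ξ ω‖ := abs_real_inner_le_norm x (ξ ω)
    have h2 := le_abs_self t
    have h3 := neg_abs_le (inner ℝ x (ξ ω) : ℝ)
    linarith
  -- pointwise derivative
  have hdiff : ∀ (x : EuclideanSpace ℝ (Fin d)) ω, HasFDerivAt (fun y : EuclideanSpace ℝ (Fin d) => c y ω ^ p)
      ((-(p * c x ω ^ (p - 1))) • (innerSL ℝ (ξ ω))) x := by
    intro x ω
    have h2 : HasFDerivAt (fun y : EuclideanSpace ℝ (Fin d) => (inner ℝ y (ξ ω) : ℝ)) (innerSL ℝ (ξ ω)) x := by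
      have h := (innerSL ℝ (ξ ω)).hasFDerivAt (x := x)
      apply h.congr_of_eventuallyEq
      filter_upwards with y
      simp [mul_comm]
      exact real_inner_comm _ _
    have h1 : HasFDerivAt (fun y : EuclideanSpace ℝ (Fin d) => t - (inner ℝ y (ξ ω) : ℝ)) (-(innerSL ℝ (ξ ω))) x := by
      have h4 := (hasFDerivAt_const t x).sub h2
      simp only [zero_sub] at h4
      exact h4
    have h3 := (maxpow_hasDerivAt p hp (t - (inner ℝ x (ξ ω) : ℝ))).comp_hasFDerivAt x h1
    simp only [smul_neg, ← neg_smul] at h3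
    exact h3
  -- measurability of F x
  have hFmeas : ∀ x : EuclideanSpace ℝ (Fin d), AEStronglyMeasurable (fun ω => c x ω ^ p) μ := by
    intro x
    exact ((Real.continuous_rpow_const hp0.le).comp
      ((continuous_const.sub (innerSL ℝ x).continuous).max continuous_const)).comp_aestronglyMeasurable hξm
  -- integrability of F x₀
  have hFint : Integrable (fun ω => c x₀ ω ^ p) μ := by
    refine Integrable.mono (g := fun ω => (|t| + ‖x₀‖ * ‖ξ ω‖) ^ p * ‖ξ ω‖ ^ (0:ℝ))
      (hmaster |t| ‖x₀‖ p 0 (abs_nonneg t) (norm_nonneg _) hp0.le le_rfl (by linarith))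
      (hFmeas x₀) ?_
    filter_upwards with ω
    rw [Real.norm_eq_abs, Real.norm_eq_abs, Real.rpow_zero, mul_one,
      abs_of_nonneg (Real.rpow_nonneg (hc_nonneg x₀ ω) p),
      abs_of_nonneg (Real.rpow_nonneg (by positivity) p)]
    exact Real.rpow_le_rpow (hc_nonneg x₀ ω) (hc_le x₀ ω) hp0.le
  -- measurability of F' x₀
  have hF'meas : AEStronglyMeasurable
      (fun ω => (-(p * c x₀ ω ^ (p - 1))) • (innerSL ℝ (ξ ω))) μ := by
    refine AEStronglyMeasurable.smul (f := fun ω => -(p * c x₀ ω ^ (p - 1)))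
      (g := fun ω => innerSL ℝ (ξ ω)) ?_ ?_
    · exact (continuous_const.mul ((Real.continuous_rpow_const hp1).comp
        ((continuous_const.sub (innerSL ℝ x₀).continuous).max
          continuous_const))).neg.comp_aestronglyMeasurable hξm
    · exact (innerSL ℝ (E := EuclideanSpace ℝ (Fin d))).continuous.comp_aestronglyMeasurable hξm
  -- bound
  set bound : Ω → ℝ :=
    fun ω => p * ((|t| + (‖x₀‖ + 1) * ‖ξ ω‖) ^ (p - 1) * ‖ξ ω‖ ^ (1:ℝ)) with hbdef
  have hbound_int : Integrable bound μ :=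
    (hmaster |t| (‖x₀‖ + 1) (p - 1) 1 (abs_nonneg t) (by positivity) hp1 zero_le_one
      (by linarith)).const_mul p
  have hbound : ∀ ω, ∀ x ∈ Metric.ball x₀ 1,
      ‖(-(p * c x ω ^ (p - 1))) • (innerSL ℝ (ξ ω))‖ ≤ bound ω := by
    intro ω x hx
    have hxn : ‖x‖ ≤ ‖x₀‖ + 1 := by
      have h := mem_ball_iff_norm.mp hx
      calc ‖x‖ = ‖x₀ + (x - x₀)‖ := by congr 1; abel
        _ ≤ ‖x₀‖ + ‖x - x₀‖ := norm_add_le _ _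
        _ ≤ ‖x₀‖ + 1 := by linarith
    rw [norm_smul (-(p * c x ω ^ (p - 1))) (innerSL ℝ (ξ ω)), innerSL_apply_norm,
      Real.norm_eq_abs, abs_neg, abs_of_nonneg (by positivity), hbdef]
    have hcle : c x ω ^ (p - 1) ≤ (|t| + (‖x₀‖ + 1) * ‖ξ ω‖) ^ (p - 1) := by
      apply Real.rpow_le_rpow (hc_nonneg x ω) _ hp1
      calc c x ω ≤ |t| + ‖x‖ * ‖ξ ω‖ := hc_le x ω
        _ ≤ |t| + (‖x₀‖ + 1) * ‖ξ ω‖ := by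
            have := mul_le_mul_of_nonneg_right hxn (norm_nonneg (ξ ω))
            linarith
    simp only [Real.rpow_one]
    rw [mul_assoc]
    apply mul_le_mul_of_nonneg_left _ hp0.le
    exact mul_le_mul_of_nonneg_right hcle (norm_nonneg _)
  -- apply the parametric integral theorem
  have main := hasFDerivAt_integral_of_dominated_of_fderiv_le (𝕜 := ℝ) (μ := μ)
    (F := fun x ω => c x ω ^ p)
    (F' := fun x ω => (-(p * c x ω ^ (p - 1))) • (innerSL ℝ (ξ ω)))
    (x₀ := x₀) (bound := bound) (Metric.ball_mem_nhds x₀ zero_lt_one)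
    (Filter.Eventually.of_forall hFmeas) hFint hF'meas
    (Filter.Eventually.of_forall fun ω => fun x hx => hbound ω x hx) hbound_int
    (Filter.Eventually.of_forall fun ω => fun x _ => hdiff x ω)
  -- identify the derivative
  have hGint : Integrable (fun ω => c x₀ ω ^ (p - 1) • ξ ω) μ := by
    refine Integrable.mono (g := fun ω => (|t| + ‖x₀‖ * ‖ξ ω‖) ^ (p - 1) * ‖ξ ω‖ ^ (1:ℝ))
      (hmaster |t| ‖x₀‖ (p - 1) 1 (abs_nonneg t) (norm_nonneg _) hp1 zero_le_one (by linarith))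
      (((((Real.continuous_rpow_const hp1).comp
        ((continuous_const.sub (innerSL ℝ x₀).continuous).max
          continuous_const)).comp_aestronglyMeasurable hξm).smul hξm)) ?_
    filter_upwards with ω
    rw [norm_smul, Real.norm_eq_abs, Real.norm_eq_abs,
      abs_of_nonneg (Real.rpow_nonneg (hc_nonneg x₀ ω) _), Real.rpow_one,
      abs_of_nonneg (by positivity)]
    exact mul_le_mul_of_nonneg_right
      (Real.rpow_le_rpow (hc_nonneg x₀ ω) (hc_le x₀ ω) hp1) (norm_nonneg _)
  have hkey : (∫ ω, (-(p * c x₀ ω ^ (p - 1))) • (innerSL ℝ (ξ ω)) ∂μ)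
      = (InnerProductSpace.toDual ℝ (EuclideanSpace ℝ (Fin d)))
        ((-p) • ∫ ω, c x₀ ω ^ (p - 1) • ξ ω ∂μ) := by
    set L := (InnerProductSpace.toDual ℝ (EuclideanSpace ℝ (Fin d))).toContinuousLinearEquiv
      with hLdef
    calc (∫ ω, (-(p * c x₀ ω ^ (p - 1))) • (innerSL ℝ (ξ ω)) ∂μ)
        = ∫ ω, L ((-p) • (c x₀ ω ^ (p - 1) • ξ ω)) ∂μ := by
          apply integral_congr_ae
          filter_upwards with ω
          ext y
          simp only [hLdef, ContinuousLinearMap.smul_apply,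
            LinearIsometryEquiv.coe_toContinuousLinearEquiv,
            InnerProductSpace.toDual_apply_apply, innerSL_apply_apply, smul_eq_mul]
          rw [real_inner_smul_left, real_inner_smul_left]
          ring
      _ = L ((-p) • ∫ ω, c x₀ ω ^ (p - 1) • ξ ω ∂μ) := by
          rw [L.integral_comp_comm, integral_smul]
      _ = (InnerProductSpace.toDual ℝ (EuclideanSpace ℝ (Fin d)))
          ((-p) • ∫ ω, c x₀ ω ^ (p - 1) • ξ ω ∂μ) := by
          rw [hLdef]; rfl
  rw [← hkey]
  exact main
end
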